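/- arXiv:1901.04064 — 3 statements merged into one kernel-verified Lean document; each statement's English description precedes it below -/
import Mathlib

section
/- Every tree-child phylogenetic network is an orchard network. -/
/-- A finite directed graph on natural-number vertices, with no parallel arcs
(arcs form a `Finset` of ordered pairs). -/
structure Digraph' where
  V : Finset ℕ
  A : Finset (ℕ × ℕ)
  mem_V : ∀ e ∈ A, e.1 ∈ V ∧ e.2 ∈ V

namespace Digraph'

def inDeg (N : Digraph') (v : ℕ) : ℕ := (N.A.filter (fun e => e.2 = v)).card

def outDeg (N : Digraph') (v : ℕ) : ℕ := (N.A.filter (fun e => e.1 = v)).card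

/-- Reachability by a directed path (including paths of length 0). -/
def Reach (N : Digraph') : ℕ → ℕ → Prop :=
  Relation.ReflTransGen (fun u v => (u, v) ∈ N.A)

def Acyclic (N : Digraph') : Prop := ∀ u v, (u, v) ∈ N.A → ¬ N.Reach v u

def IsLeaf (N : Digraph') (v : ℕ) : Prop := v ∈ N.V ∧ N.outDeg v = 0

def IsTreeVertex (N : Digraph') (v : ℕ) : Prop :=
  v ∈ N.V ∧ N.inDeg v = 1 ∧ N.outDeg v = 2

def IsRet (N : Digraph') (v : ℕ) : Prop :=
  v ∈ N.V ∧ N.inDeg v = 2 ∧ N.outDeg v = 1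

/-- `N` is a (binary) phylogenetic network on leaf set `X`. -/
structure IsPhylo (N : Digraph') (X : Finset ℕ) : Prop where
  acyclic : N.Acyclic
  X_sub : X ⊆ N.V
  leafSet : ∀ v ∈ N.V, (N.outDeg v = 0 ↔ v ∈ X)
  root : ∃ ρ ∈ N.V, N.inDeg ρ = 0 ∧ N.outDeg ρ = 2 ∧ ∀ v ∈ N.V, N.Reach ρ v
  degrees : ∀ v ∈ N.V,
    (N.inDeg v = 0 ∧ N.outDeg v = 2) ∨ (N.inDeg v = 1 ∧ N.outDeg v = 0) ∨
    (N.inDeg v = 1 ∧ N.outDeg v = 2) ∨ (N.inDeg v = 2 ∧ N.outDeg v = 1)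

/-- The degenerate single-vertex network. -/
def IsSingle (N : Digraph') : Prop := ∃ x, N.V = {x} ∧ N.A = ∅

/-- `{a, b}` is a cherry: two distinct leaves with a common parent. -/
def IsCherry (N : Digraph') (a b : ℕ) : Prop :=
  a ≠ b ∧ N.IsLeaf a ∧ N.IsLeaf b ∧ ∃ p, (p, a) ∈ N.A ∧ (p, b) ∈ N.A

/-- `{a, b}` is a reticulated cherry with `b` the reticulation leaf. -/
def IsRetCherry (N : Digraph') (a b : ℕ) : Prop :=
  a ≠ b ∧ N.IsLeaf a ∧ N.IsLeaf b ∧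
  ∃ pa pb, (pa, a) ∈ N.A ∧ (pb, b) ∈ N.A ∧ N.inDeg pb = 2 ∧ (pa, pb) ∈ N.A

/-- `N'` is obtained from `N` by reducing the leaf `b` of the cherry `{a, b}`:
delete `b` and suppress the resulting in-degree-1 out-degree-1 vertex
(if the common parent is the root, delete `b` and the root, leaving the single
vertex `a`). -/
def ReduceCherry (N N' : Digraph') (a b : ℕ) : Prop :=
  N.IsCherry a b ∧ ∃ p, (p, a) ∈ N.A ∧ (p, b) ∈ N.A ∧
    ((N.inDeg p = 0 ∧ N'.V = {a} ∧ N'.A = ∅) ∨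
     (∃ u, (u, p) ∈ N.A ∧ N'.V = (N.V.erase b).erase p ∧
        N'.A = insert (u, a) (((N.A.erase (u, p)).erase (p, a)).erase (p, b))))

/-- `N'` is obtained from `N` by cutting the reticulated cherry `{a, b}` with `b`
the reticulation leaf: delete the reticulation arc from the parent of `a` to the
parent of `b`, and suppress the two resulting in-degree-1 out-degree-1 vertices. -/
def CutRetCherry (N N' : Digraph') (a b : ℕ) : Prop :=
  N.IsRetCherry a b ∧ ∃ pa pb ua q,
    (pa, a) ∈ N.A ∧ (pb, b) ∈ N.A ∧ N.inDeg pb = 2 ∧ (pa, pb) ∈ N.A ∧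
    (ua, pa) ∈ N.A ∧ (q, pb) ∈ N.A ∧ q ≠ pa ∧
    N'.V = (N.V.erase pa).erase pb ∧
    N'.A = insert (ua, a) (insert (q, b)
      (((((N.A.erase (pa, pb)).erase (ua, pa)).erase (pa, a)).erase (q, pb)).erase (pb, b)))

/-- A single cherry reduction. -/
def CherryStep (N N' : Digraph') : Prop :=
  ∃ a b, ReduceCherry N N' a b ∨ CutRetCherry N N' a b

/-- `N` is an orchard network: some sequence of cherry reductions reduces it to a
single vertex. -/
def IsOrchard (N : Digraph') : Prop :=
  ∃ N', Relation.ReflTransGen CherryStep N N' ∧ IsSingle N'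

/-- The ancestral set `γ(x)`: the non-leaf vertices from which `x` is reachable. -/
def gamma (N : Digraph') (x : ℕ) : Set ℕ :=
  {v | v ∈ N.V ∧ N.outDeg v ≠ 0 ∧ N.Reach v x}

/-- The number of directed paths in `N` from `u` to `x` (a path is recorded as the
list of its vertices; the single-vertex path counts when `u = x`). -/
noncomputable def numPaths (N : Digraph') (u x : ℕ) : ℕ :=
  Set.ncard {l : List ℕ | l.head? = some u ∧ l.getLast? = some x ∧
    l.Chain' (fun p q => (p, q) ∈ N.A)}

/-- Tree-sibling: every reticulation has a parent that is also the parent of a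
tree vertex or a leaf. -/
def TreeSibling (N : Digraph') : Prop :=
  ∀ v ∈ N.V, N.inDeg v = 2 → ∃ p w, (p, v) ∈ N.A ∧ (p, w) ∈ N.A ∧ w ≠ v ∧
    (N.IsTreeVertex w ∨ N.IsLeaf w)

/-- Time-consistent: there is a temporal labelling of the vertices. -/
def TimeConsistent (N : Digraph') : Prop :=
  ∃ t : ℕ → ℕ, ∀ u v, (u, v) ∈ N.A →
    (N.inDeg v = 2 → t u = t v) ∧ (N.inDeg v ≠ 2 → t u < t v)

/-- Tree-child: every non-leaf vertex has a child that is a tree vertex or a leaf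
(equivalently, a child of in-degree one). -/
def TreeChild (N : Digraph') : Prop :=
  ∀ v ∈ N.V, N.outDeg v ≠ 0 → ∃ w, (v, w) ∈ N.A ∧ N.inDeg w = 1

end Digraph'

open Digraph'

namespace Digraph'

variable {N : Digraph'}

lemma arc_reach {a b : ℕ} (h : (a,b) ∈ N.A) : N.Reach a b :=
  Relation.ReflTransGen.single h

lemma arc_ne (hac : N.Acyclic) {u v : ℕ} (h : (u,v) ∈ N.A) : u ≠ v := by
  intro e; subst e; exact hac u u h Relation.ReflTransGen.refl

lemma exists_arc_into {x y : ℕ} (h : N.Reach x y) (hxy : x ≠ y) : ∃ u, (u,y) ∈ N.A := by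
  induction h with
  | refl => exact absurd rfl hxy
  | tail _ h2 _ => exact ⟨_, h2⟩

lemma outdeg_zero_not_arc {x y : ℕ} (h0 : N.outDeg x = 0) (h : (x,y) ∈ N.A) : False := by
  have h1 : N.A.filter (fun e => e.1 = x) = ∅ := Finset.card_eq_zero.1 h0
  have h2 : (x,y) ∈ N.A.filter (fun e => e.1 = x) := Finset.mem_filter.2 ⟨h, rfl⟩
  simp [h1] at h2

lemma indeg_zero_not_arc {x y : ℕ} (h0 : N.inDeg y = 0) (h : (x,y) ∈ N.A) : False := by
  have h1 : N.A.filter (fun e => e.2 = y) = ∅ := Finset.card_eq_zero.1 h0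
  have h2 : (x,y) ∈ N.A.filter (fun e => e.2 = y) := Finset.mem_filter.2 ⟨h, rfl⟩
  simp [h1] at h2

lemma reach_of_outdeg_zero {x y : ℕ} (h : N.Reach x y) (h0 : N.outDeg x = 0) : y = x := by
  rcases h.cases_head with h | ⟨c, hc, _⟩
  · exact h.symm
  · exact (outdeg_zero_not_arc h0 hc).elim

lemma indeg_one_parent {v : ℕ} (h1 : N.inDeg v = 1) :
    ∃ p, (p,v) ∈ N.A ∧ ∀ q, (q,v) ∈ N.A → q = p := by
  obtain ⟨e, he⟩ := Finset.card_eq_one.1 h1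
  have hm : e ∈ N.A.filter (fun e => e.2 = v) := he ▸ Finset.mem_singleton_self e
  rw [Finset.mem_filter] at hm
  refine ⟨e.1, ?_, ?_⟩
  · have : e = (e.1, v) := by rw [← hm.2]
    exact this ▸ hm.1
  · intro q hq
    have : (q, v) ∈ N.A.filter (fun e => e.2 = v) := Finset.mem_filter.2 ⟨hq, rfl⟩
    rw [he, Finset.mem_singleton] at this
    rw [← this]

lemma outdeg_one_child {v : ℕ} (h1 : N.outDeg v = 1) :
    ∃ c, (v,c) ∈ N.A ∧ ∀ d, (v,d) ∈ N.A → d = c := by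
  obtain ⟨e, he⟩ := Finset.card_eq_one.1 h1
  have hm : e ∈ N.A.filter (fun e => e.1 = v) := he ▸ Finset.mem_singleton_self e
  rw [Finset.mem_filter] at hm
  refine ⟨e.2, ?_, ?_⟩
  · have : e = (v, e.2) := by rw [← hm.2]
    exact this ▸ hm.1
  · intro d hd
    have : (v, d) ∈ N.A.filter (fun e => e.1 = v) := Finset.mem_filter.2 ⟨hd, rfl⟩
    rw [he, Finset.mem_singleton] at this
    rw [← this]

lemma outdeg_two_children {p : ℕ} (h2 : N.outDeg p = 2) :
    ∃ a b, a ≠ b ∧ (p,a) ∈ N.A ∧ (p,b) ∈ N.A ∧ ∀ c, (p,c) ∈ N.A → c = a ∨ c = b := by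
  obtain ⟨e, f, hef, hs⟩ := Finset.card_eq_two.1 h2
  have hme : e ∈ N.A.filter (fun e => e.1 = p) := by rw [hs]; simp
  have hmf : f ∈ N.A.filter (fun e => e.1 = p) := by rw [hs]; simp
  rw [Finset.mem_filter] at hme hmf
  refine ⟨e.2, f.2, ?_, ?_, ?_, ?_⟩
  · intro h; apply hef; exact Prod.ext (hme.2.trans hmf.2.symm) h
  · have : e = (p, e.2) := by rw [← hme.2]
    exact this ▸ hme.1
  · have : f = (p, f.2) := by rw [← hmf.2]
    exact this ▸ hmf.1
  · intro c hc
    have : (p, c) ∈ N.A.filter (fun e => e.1 = p) := Finset.mem_filter.2 ⟨hc, rfl⟩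
    rw [hs, Finset.mem_insert, Finset.mem_singleton] at this
    rcases this with h | h
    · left; rw [← h]
    · right; rw [← h]

lemma indeg_two_parents {v : ℕ} (h2 : N.inDeg v = 2) :
    ∃ p q, p ≠ q ∧ (p,v) ∈ N.A ∧ (q,v) ∈ N.A ∧ ∀ x, (x,v) ∈ N.A → x = p ∨ x = q := by
  obtain ⟨e, f, hef, hs⟩ := Finset.card_eq_two.1 h2
  have hme : e ∈ N.A.filter (fun e => e.2 = v) := by rw [hs]; simp
  have hmf : f ∈ N.A.filter (fun e => e.2 = v) := by rw [hs]; simp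
  rw [Finset.mem_filter] at hme hmf
  refine ⟨e.1, f.1, ?_, ?_, ?_, ?_⟩
  · intro h; apply hef; exact Prod.ext h (hme.2.trans hmf.2.symm)
  · have : e = (e.1, v) := by rw [← hme.2]
    exact this ▸ hme.1
  · have : f = (f.1, v) := by rw [← hmf.2]
    exact this ▸ hmf.1
  · intro x hx
    have : (x, v) ∈ N.A.filter (fun e => e.2 = v) := Finset.mem_filter.2 ⟨hx, rfl⟩
    rw [hs, Finset.mem_insert, Finset.mem_singleton] at this
    rcases this with h | h
    · left; rw [← h]
    · right; rw [← h]

end Digraph'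
namespace Digraph'

variable {N : Digraph'}

def IsPath (N : Digraph') (l : List ℕ) : Prop :=
  l ≠ [] ∧ l.Chain' (fun p q => (p, q) ∈ N.A) ∧ ∀ y ∈ l, y ∈ N.V

lemma chain_reach : ∀ {l : List ℕ} {a : ℕ},
    List.Chain (fun p q => (p,q) ∈ N.A) a l → ∀ b ∈ l, N.Reach a b := by
  intro l
  induction l with
  | nil => simp
  | cons c t ih =>
    intro a h b hb
    rcases List.chain_cons.1 h with ⟨h1, h2⟩
    rcases List.mem_cons.1 hb with hb | hb
    · subst hb; exact arc_reach h1
    · exact (arc_reach h1).trans (ih h2 b hb)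

lemma path_nodup (hac : N.Acyclic) :
    ∀ {l : List ℕ}, l.Chain' (fun p q => (p,q) ∈ N.A) → l.Nodup := by
  intro l
  induction l with
  | nil => simp
  | cons x t ih =>
    intro h
    have hc : List.Chain (fun p q => (p,q) ∈ N.A) x t := h
    have ht : t.Chain' (fun p q => (p,q) ∈ N.A) := by
      cases t with
      | nil => exact List.isChain_nil
      | cons h' t' => exact (List.chain_cons.1 hc).2
    refine List.nodup_cons.2 ⟨?_, ih ht⟩
    intro hx
    cases t with
    | nil => simp at hx
    | cons h' t' =>
      rcases List.chain_cons.1 hc with ⟨h1, h2⟩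
      rcases List.mem_cons.1 hx with hx | hx
      · exact arc_ne hac h1 hx
      · exact hac x h' h1 (chain_reach h2 x hx)

lemma path_length_le (hac : N.Acyclic) {l : List ℕ} (h : N.IsPath l) :
    l.length ≤ N.V.card := by
  have hn := path_nodup hac h.2.1
  have hsub : l.toFinset ⊆ N.V := fun y hy => h.2.2 y (List.mem_toFinset.1 hy)
  calc l.length = l.toFinset.card := by rw [List.toFinset_card_of_nodup hn]
  _ ≤ N.V.card := Finset.card_le_card hsub

noncomputable def dep (N : Digraph') (x : ℕ) : ℕ :=
  @Nat.findGreatest (fun n => ∃ l, N.IsPath l ∧ l.getLast? = some x ∧ l.length = n)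
    (fun _ => Classical.propDecidable _) N.V.card

lemma single_path {x : ℕ} (hx : x ∈ N.V) : N.IsPath [x] :=
  ⟨by simp, List.isChain_singleton _, by simp [hx]⟩

lemma le_dep (hac : N.Acyclic) {l : List ℕ} {x : ℕ} (h : N.IsPath l)
    (hl : l.getLast? = some x) : l.length ≤ N.dep x := by
  exact @Nat.le_findGreatest _ _ (fun _ => Classical.propDecidable _) _
    (path_length_le hac h) ⟨l, h, hl, rfl⟩

lemma dep_pos (hac : N.Acyclic) {x : ℕ} (hx : x ∈ N.V) : 1 ≤ N.dep x :=
  le_dep hac (single_path hx) (by simp)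

lemma dep_spec (hac : N.Acyclic) {x : ℕ} (hx : x ∈ N.V) :
    ∃ l, N.IsPath l ∧ l.getLast? = some x ∧ l.length = N.dep x := by
  have h1 : (1:ℕ) ≤ N.V.card := Finset.card_pos.2 ⟨x, hx⟩
  exact @Nat.findGreatest_spec 1
    (fun n => ∃ l, N.IsPath l ∧ l.getLast? = some x ∧ l.length = n)
    (fun _ => Classical.propDecidable _) N.V.card h1
    ⟨[x], single_path hx, by simp, rfl⟩

lemma dep_lt (hac : N.Acyclic) {y x : ℕ} (h : (y,x) ∈ N.A) : N.dep y < N.dep x := by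
  have hy : y ∈ N.V := (N.mem_V _ h).1
  have hxV : x ∈ N.V := (N.mem_V _ h).2
  obtain ⟨l, hp, hlast, hlen⟩ := dep_spec hac hy
  have hpath : N.IsPath (l ++ [x]) := by
    refine ⟨by simp, ?_, ?_⟩
    · change List.IsChain _ _
      rw [List.isChain_append]
      refine ⟨hp.2.1, by simp, ?_⟩
      intro a ha b hb
      simp [hlast] at ha
      simp at hb
      subst ha; subst hb; exact h
    · intro y hy'
      rcases List.mem_append.1 hy' with h' | h'
      · exact hp.2.2 y h'
      · simp at h'; subst h'; exact hxV
  have := le_dep hac hpath List.getLast?_concat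
  simp at this
  omega

lemma dep_parent (hac : N.Acyclic) {x : ℕ} (hx : x ∈ N.V) (hpos : 0 < N.inDeg x) :
    ∃ y, (y,x) ∈ N.A ∧ N.dep x ≤ N.dep y + 1 := by
  obtain ⟨l, hp, hlast, hlen⟩ := dep_spec hac hx
  by_cases hl : l.length ≤ 1
  · obtain ⟨e, he⟩ := Finset.card_pos.1 hpos
    rw [Finset.mem_filter] at he
    refine ⟨e.1, ?_, ?_⟩
    · have : e = (e.1, x) := by rw [← he.2]
      exact this ▸ he.1
    · omega
  · push_neg at hl
    have hne : l ≠ [] := hp.1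
    have hgl : l.getLast hne = x := by
      have := List.getLast?_eq_getLast hne
      rw [hlast] at this
      exact (Option.some_injective _ this).symm
    have hsplit : l.dropLast ++ [x] = l := by
      rw [← hgl]; exact List.dropLast_append_getLast hne
    have hlen' : l.dropLast.length = l.length - 1 := List.length_dropLast
    have hne' : l.dropLast ≠ [] := by
      apply List.ne_nil_of_length_pos; omega
    set y := l.dropLast.getLast hne' with hy
    have hylast : l.dropLast.getLast? = some y := List.getLast?_eq_getLast hne'
    have hchain : (l.dropLast ++ [x]).Chain' (fun p q => (p,q) ∈ N.A) := by
      rw [hsplit]; exact hp.2.1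
    change List.IsChain _ _ at hchain
    rw [List.isChain_append] at hchain
    have harc : (y, x) ∈ N.A := by
      apply hchain.2.2 y (by rw [hylast]; simp) x (by simp)
    have hpath' : N.IsPath l.dropLast := by
      refine ⟨hne', hchain.1, ?_⟩
      intro z hz
      exact hp.2.2 z (List.dropLast_subset l hz)
    have := le_dep hac hpath' hylast
    exact ⟨y, harc, by omega⟩

end Digraph'
namespace Digraph'

variable {N : Digraph'}

/-- The invariant maintained through the cherry reductions. -/
structure Good (N : Digraph') : Prop where
  acyclic : N.Acyclic
  root : ∃ ρ ∈ N.V, N.inDeg ρ = 0 ∧ N.outDeg ρ = 2 ∧ ∀ v ∈ N.V, N.Reach ρ v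
  degrees : ∀ v ∈ N.V,
    (N.inDeg v = 0 ∧ N.outDeg v = 2) ∨ (N.inDeg v = 1 ∧ N.outDeg v = 0) ∨
    (N.inDeg v = 1 ∧ N.outDeg v = 2) ∨ (N.inDeg v = 2 ∧ N.outDeg v = 1)
  tc : N.TreeChild

lemma dep_le_one_of_indeg_zero (hac : N.Acyclic) {x : ℕ} (hx : x ∈ N.V)
    (h0 : N.inDeg x = 0) : N.dep x ≤ 1 := by
  obtain ⟨l, hp, hlast, hlen⟩ := dep_spec hac hx
  by_cases hl : l.length ≤ 1
  · omega
  · exfalso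
    push_neg at hl
    have hne : l ≠ [] := hp.1
    have hgl : l.getLast hne = x := by
      have := List.getLast?_eq_getLast hne
      rw [hlast] at this
      exact (Option.some_injective _ this).symm
    have hsplit : l.dropLast ++ [x] = l := by
      rw [← hgl]; exact List.dropLast_append_getLast hne
    have hlen' : l.dropLast.length = l.length - 1 := List.length_dropLast
    have hne' : l.dropLast ≠ [] := by
      apply List.ne_nil_of_length_pos; omega
    set y := l.dropLast.getLast hne' with hy
    have hylast : l.dropLast.getLast? = some y := List.getLast?_eq_getLast hne'
    have hchain : (l.dropLast ++ [x]).Chain' (fun p q => (p,q) ∈ N.A) := by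
      rw [hsplit]; exact hp.2.1
    change List.IsChain _ _ at hchain
    rw [List.isChain_append] at hchain
    have harc : (y, x) ∈ N.A := by
      apply hchain.2.2 y (by rw [hylast]; simp) x (by simp)
    exact indeg_zero_not_arc h0 harc

lemma indeg_pos_parent {x : ℕ} (h : N.inDeg x ≠ 0) : ∃ u, (u, x) ∈ N.A := by
  obtain ⟨e, he⟩ := Finset.card_pos.1 (Nat.pos_of_ne_zero h)
  rw [Finset.mem_filter] at he
  have : e = (e.1, x) := by rw [← he.2]
  exact ⟨e.1, this ▸ he.1⟩

lemma exists_cherry (hg : Good N) :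
    (∃ a b p, a ≠ b ∧ N.IsLeaf a ∧ N.IsLeaf b ∧ (p,a) ∈ N.A ∧ (p,b) ∈ N.A ∧
      (N.inDeg p = 0 ∨ ∃ u, (u,p) ∈ N.A)) ∨
    (∃ a b pa pb ua q, a ≠ b ∧ N.IsLeaf a ∧ N.IsLeaf b ∧ (pa,a) ∈ N.A ∧ (pb,b) ∈ N.A ∧
      N.inDeg pb = 2 ∧ (pa,pb) ∈ N.A ∧ (ua,pa) ∈ N.A ∧ (q,pb) ∈ N.A ∧ q ≠ pa) := by
  classical
  obtain ⟨ρ, hρV, hρin, hρout, hρreach⟩ := hg.root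
  have eq_root : ∀ p ∈ N.V, N.inDeg p = 0 → p = ρ := by
    intro p hpV h0
    by_contra hne
    obtain ⟨u, hu⟩ := exists_arc_into (hρreach p hpV) (fun e => hne e.symm)
    exact indeg_zero_not_arc h0 hu
  set S := N.V.filter (fun v => N.outDeg v ≠ 0) with hS
  have hSne : S.Nonempty := ⟨ρ, Finset.mem_filter.2 ⟨hρV, by omega⟩⟩
  obtain ⟨v, hvS, hmax⟩ := S.exists_max_image N.dep hSne
  rw [Finset.mem_filter] at hvS
  obtain ⟨hvV, hvout⟩ := hvS
  have hleafchild : ∀ w, N.dep v ≤ N.dep w → ∀ c, (w,c) ∈ N.A → N.IsLeaf c := by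
    intro w hw c hc
    have hcV : c ∈ N.V := (N.mem_V _ hc).2
    refine ⟨hcV, ?_⟩
    by_contra hc0
    have hcS : c ∈ S := Finset.mem_filter.2 ⟨hcV, hc0⟩
    have := hmax c hcS
    have := dep_lt hg.acyclic hc
    omega
  have hcherry_at : ∀ w ∈ N.V, N.dep v ≤ N.dep w → N.inDeg w = 1 → N.outDeg w ≠ 0 →
      (∃ a b p, a ≠ b ∧ N.IsLeaf a ∧ N.IsLeaf b ∧ (p,a) ∈ N.A ∧ (p,b) ∈ N.A ∧
        (N.inDeg p = 0 ∨ ∃ u, (u,p) ∈ N.A)) := by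
    intro w hwV hwd hwin hwout
    have hout2 : N.outDeg w = 2 := by
      rcases hg.degrees w hwV with ⟨h1,h2⟩|⟨h1,h2⟩|⟨h1,h2⟩|⟨h1,h2⟩ <;> omega
    obtain ⟨a, b, hab, ha, hb, _⟩ := outdeg_two_children hout2
    exact ⟨a, b, w, hab, hleafchild w hwd a ha, hleafchild w hwd b hb, ha, hb,
      Or.inr (by obtain ⟨u, hu, _⟩ := indeg_one_parent hwin; exact ⟨u, hu⟩)⟩
  rcases hg.degrees v hvV with ⟨hin,hout⟩|⟨hin,hout⟩|⟨hin,hout⟩|⟨hin,hout⟩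
  · -- root with two children
    obtain ⟨a, b, hab, ha, hb, _⟩ := outdeg_two_children hout
    exact Or.inl ⟨a, b, v, hab, hleafchild v le_rfl a ha, hleafchild v le_rfl b hb,
      ha, hb, Or.inl hin⟩
  · omega
  · exact Or.inl (hcherry_at v hvV le_rfl hin hvout)
  · -- v is a reticulation
    obtain ⟨b, hvb, _⟩ := outdeg_one_child hout
    have hbleaf := hleafchild v le_rfl b hvb
    obtain ⟨p, hpv, hple⟩ := dep_parent hg.acyclic hvV (by omega)
    obtain ⟨p1, p2, hp12, hp1, hp2, hpall⟩ := indeg_two_parents hin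
    have hq : ∃ q, (q,v) ∈ N.A ∧ q ≠ p := by
      rcases hpall p hpv with rfl | rfl
      · exact ⟨p2, hp2, fun e => hp12 e.symm⟩
      · exact ⟨p1, hp1, hp12⟩
    obtain ⟨q, hqv, hqp⟩ := hq
    have hpV : p ∈ N.V := (N.mem_V _ hpv).1
    have hpout : N.outDeg p ≠ 0 := fun h0 => outdeg_zero_not_arc h0 hpv
    obtain ⟨w, hpw, hwin⟩ := hg.tc p hpV hpout
    have hwV : w ∈ N.V := (N.mem_V _ hpw).2
    have hwv : w ≠ v := by intro e; rw [e] at hwin; omega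
    by_cases hwout : N.outDeg w = 0
    · -- reticulated cherry {w, b}
      right
      have hbV : b ∈ N.V := hbleaf.1
      have hbin : N.inDeg b = 1 := by
        rcases hg.degrees b hbV with ⟨h1,h2⟩|⟨h1,h2⟩|⟨h1,h2⟩|⟨h1,h2⟩ <;>
          first | omega | (exfalso; exact absurd h2 (by rw [hbleaf.2] at *; omega))
      have hwb : w ≠ b := by
        intro e; subst e
        obtain ⟨pp, hpp, huniq⟩ := indeg_one_parent hbin
        have h1 := huniq p hpw
        have h2 := huniq v hvb
        exact (arc_ne hg.acyclic hpv) (h1.symm ▸ h2.symm ▸ rfl)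
      have hpin : N.inDeg p ≠ 0 := by
        intro h0
        have hpρ : p = ρ := eq_root p hpV h0
        have hdp : N.dep p ≤ 1 := dep_le_one_of_indeg_zero hg.acyclic hpV h0
        have hdq : N.dep q < N.dep v := dep_lt hg.acyclic hqv
        have hqV : q ∈ N.V := (N.mem_V _ hqv).1
        have hdq1 : 1 ≤ N.dep q := dep_pos hg.acyclic hqV
        have hqin : N.inDeg q = 0 := by
          by_contra hqin
          obtain ⟨u, hu⟩ := indeg_pos_parent hqin
          have h1 := dep_lt hg.acyclic hu
          have h2 : 1 ≤ N.dep u := dep_pos hg.acyclic (show u ∈ N.V from (N.mem_V _ hu).1)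
          omega
        exact hqp ((eq_root q hqV hqin).trans hpρ.symm)
      have hpin1 : N.inDeg p = 1 := by
        rcases hg.degrees p hpV with ⟨h1,h2⟩|⟨h1,h2⟩|⟨h1,h2⟩|⟨h1,h2⟩
        · omega
        · omega
        · omega
        · exfalso
          obtain ⟨c, hc, huniq⟩ := outdeg_one_child h2
          have e1 := huniq w hpw
          have e2 := huniq v hpv
          exact hwv (e1.trans e2.symm)
      obtain ⟨ua, hua, _⟩ := indeg_one_parent hpin1
      exact ⟨w, b, p, v, ua, q, hwb, ⟨hwV, hwout⟩, hbleaf, hpw, hvb, hin, hpv, hua, hqv, hqp⟩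
    · -- w is a tree vertex of maximal depth: cherry at w
      left
      have hd : N.dep v ≤ N.dep w := by
        have := dep_lt hg.acyclic hpw
        omega
      exact hcherry_at w hwV hd hwin hwout

end Digraph'
namespace Digraph'

variable {N : Digraph'}

lemma reduce_good (hg : Good N) {a b p u : ℕ} (hab : a ≠ b) (ha : N.IsLeaf a)
    (hb : N.IsLeaf b) (hpa : (p,a) ∈ N.A) (hpb : (p,b) ∈ N.A) (hup : (u,p) ∈ N.A) :
    ∃ N', N.ReduceCherry N' a b ∧ Good N' ∧ N'.V.card < N.V.card := by
  classical
  have hac := hg.acyclic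
  have haV : a ∈ N.V := ha.1
  have hbV : b ∈ N.V := hb.1
  have hpV : p ∈ N.V := (N.mem_V _ hpa).1
  have huV : u ∈ N.V := (N.mem_V _ hup).1
  have hup_ne : u ≠ p := arc_ne hac hup
  have hpa_ne : p ≠ a := arc_ne hac hpa
  have hpb_ne : p ≠ b := arc_ne hac hpb
  have hua_ne : u ≠ a := fun e => outdeg_zero_not_arc ha.2 (e ▸ hup)
  have hub_ne : u ≠ b := fun e => outdeg_zero_not_arc hb.2 (e ▸ hup)
  have hain : N.inDeg a = 1 := by
    rcases hg.degrees a haV with ⟨h1,h2⟩|⟨h1,h2⟩|⟨h1,h2⟩|⟨h1,h2⟩ <;> (have := ha.2; omega)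
  have hbin : N.inDeg b = 1 := by
    rcases hg.degrees b hbV with ⟨h1,h2⟩|⟨h1,h2⟩|⟨h1,h2⟩|⟨h1,h2⟩ <;> (have := hb.2; omega)
  have hpout : N.outDeg p = 2 := by
    rcases hg.degrees p hpV with ⟨h1,h2⟩|⟨h1,h2⟩|⟨h1,h2⟩|⟨h1,h2⟩
    · exact h2
    · exact (outdeg_zero_not_arc h2 hpa).elim
    · exact h2
    · exfalso
      obtain ⟨c,hc,huniq⟩ := outdeg_one_child h2
      exact hab ((huniq a hpa).trans (huniq b hpb).symm)
  have hpin : N.inDeg p = 1 := by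
    rcases hg.degrees p hpV with ⟨h1,h2⟩|⟨h1,h2⟩|⟨h1,h2⟩|⟨h1,h2⟩
    · exact (indeg_zero_not_arc h1 hup).elim
    · omega
    · exact h1
    · omega
  have hparent_p : ∀ x, (x,p) ∈ N.A → x = u := by
    obtain ⟨p0, _, huniq⟩ := indeg_one_parent hpin
    intro x hx; rw [huniq x hx, ← huniq u hup]
  have hparent_a : ∀ x, (x,a) ∈ N.A → x = p := by
    obtain ⟨p0, _, huniq⟩ := indeg_one_parent hain
    intro x hx; rw [huniq x hx, ← huniq p hpa]
  have hparent_b : ∀ x, (x,b) ∈ N.A → x = p := by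
    obtain ⟨p0, _, huniq⟩ := indeg_one_parent hbin
    intro x hx; rw [huniq x hx, ← huniq p hpb]
  have hchild_p : ∀ c, (p,c) ∈ N.A → c = a ∨ c = b := by
    obtain ⟨a', b', hab', ha', hb', huniq⟩ := outdeg_two_children hpout
    intro c hc
    have h1 := huniq c hc
    have h2 := huniq a hpa
    have h3 := huniq b hpb
    omega
  have hnua : (u,a) ∉ N.A := fun h => hup_ne (hparent_a u h)
  set VV := (N.V.erase b).erase p with hVV
  set AA := insert (u,a) (((N.A.erase (u,p)).erase (p,a)).erase (p,b)) with hAA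
  have hVmem : ∀ x, x ∈ VV ↔ (x ∈ N.V ∧ x ≠ b ∧ x ≠ p) := by
    intro x; rw [hVV]; simp [Finset.mem_erase]; tauto
  have hAmem : ∀ e : ℕ × ℕ, e ∈ AA ↔
      (e = (u,a) ∨ (e ∈ N.A ∧ e ≠ (u,p) ∧ e ≠ (p,a) ∧ e ≠ (p,b))) := by
    intro e; rw [hAA]; simp [Finset.mem_insert, Finset.mem_erase]; tauto
  have hmemV : ∀ e ∈ AA, e.1 ∈ VV ∧ e.2 ∈ VV := by
    intro e he
    rcases (hAmem _).1 he with rfl | ⟨heA, h1, h2, h3⟩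
    · exact ⟨(hVmem u).2 ⟨huV, hub_ne, hup_ne⟩,
        (hVmem a).2 ⟨haV, hab, fun h => hpa_ne h.symm⟩⟩
    · obtain ⟨x, y⟩ := e
      constructor
      · refine (hVmem x).2 ⟨(N.mem_V _ heA).1, ?_, ?_⟩
        · intro e; subst e; exact outdeg_zero_not_arc hb.2 heA
        · intro e; subst e
          rcases hchild_p y heA with rfl | rfl
          · exact h2 rfl
          · exact h3 rfl
      · refine (hVmem y).2 ⟨(N.mem_V _ heA).2, ?_, ?_⟩
        · intro e; subst e
          exact h3 (by rw [hparent_b x heA])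
        · intro e; subst e
          exact h1 (by rw [hparent_p x heA])
  refine ⟨⟨VV, AA, hmemV⟩, ?_⟩
  set N' : Digraph' := ⟨VV, AA, hmemV⟩ with hN'
  have hV'eq : N'.V = VV := rfl
  have hA'eq : N'.A = AA := rfl
  -- degree preservation
  have houtd : ∀ v, v ≠ p → v ≠ b → N'.outDeg v = N.outDeg v := by
    intro v hvp hvb
    unfold outDeg
    rw [hA'eq]
    apply Finset.card_bij' (fun f _ => if f = ((u:ℕ),(a:ℕ)) then (u,p) else f)
      (fun e _ => if e = ((u:ℕ),(p:ℕ)) then (u,a) else e)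
    · intro f hf
      rw [Finset.mem_filter] at hf ⊢
      by_cases h : f = ((u:ℕ),(a:ℕ))
      · subst h; simp only [if_pos rfl]
        exact ⟨hup, hf.2⟩
      · rw [if_neg h]
        rcases (hAmem _).1 hf.1 with e | ⟨heA, _⟩
        · exact absurd e h
        · exact ⟨heA, hf.2⟩
    · intro e he
      rw [Finset.mem_filter] at he ⊢
      by_cases h : e = ((u:ℕ),(p:ℕ))
      · subst h; simp only [if_pos rfl]
        exact ⟨(hAmem _).2 (Or.inl rfl), he.2⟩
      · rw [if_neg h]
        refine ⟨(hAmem _).2 (Or.inr ⟨he.1, h, ?_, ?_⟩), he.2⟩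
        · intro e'; subst e'; exact hvp he.2.symm
        · intro e'; subst e'; exact hvp he.2.symm
    · intro f hf
      rw [Finset.mem_filter] at hf
      by_cases h : f = ((u:ℕ),(a:ℕ))
      · subst h; simp
      · rw [if_neg h]
        have : f ≠ ((u:ℕ),(p:ℕ)) := by
          rcases (hAmem _).1 hf.1 with e | ⟨_, h1, _⟩
          · exact absurd e h
          · exact h1
        rw [if_neg this]
    · intro e he
      rw [Finset.mem_filter] at he
      by_cases h : e = ((u:ℕ),(p:ℕ))
      · subst h; simp
      · rw [if_neg h]
        have : e ≠ ((u:ℕ),(a:ℕ)) := fun e' => hnua (e' ▸ he.1)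
        rw [if_neg this]
  have hind : ∀ v, v ≠ p → v ≠ b → N'.inDeg v = N.inDeg v := by
    intro v hvp hvb
    unfold inDeg
    rw [hA'eq]
    apply Finset.card_bij' (fun f _ => if f = ((u:ℕ),(a:ℕ)) then (p,a) else f)
      (fun e _ => if e = ((p:ℕ),(a:ℕ)) then (u,a) else e)
    · intro f hf
      rw [Finset.mem_filter] at hf ⊢
      by_cases h : f = ((u:ℕ),(a:ℕ))
      · subst h; simp only [if_pos rfl]
        exact ⟨hpa, hf.2⟩
      · rw [if_neg h]
        rcases (hAmem _).1 hf.1 with e | ⟨heA, _⟩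
        · exact absurd e h
        · exact ⟨heA, hf.2⟩
    · intro e he
      rw [Finset.mem_filter] at he ⊢
      by_cases h : e = ((p:ℕ),(a:ℕ))
      · subst h; simp only [if_pos rfl]
        exact ⟨(hAmem _).2 (Or.inl rfl), he.2⟩
      · rw [if_neg h]
        refine ⟨(hAmem _).2 (Or.inr ⟨he.1, ?_, h, ?_⟩), he.2⟩
        · intro e'; subst e'; exact hvp he.2.symm
        · intro e'; subst e'; exact hvb he.2.symm
    · intro f hf
      rw [Finset.mem_filter] at hf
      by_cases h : f = ((u:ℕ),(a:ℕ))
      · subst h; simp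
      · rw [if_neg h]
        have : f ≠ ((p:ℕ),(a:ℕ)) := by
          rcases (hAmem _).1 hf.1 with e | ⟨_, _, h2, _⟩
          · exact absurd e h
          · exact h2
        rw [if_neg this]
    · intro e he
      rw [Finset.mem_filter] at he
      by_cases h : e = ((p:ℕ),(a:ℕ))
      · subst h; simp
      · rw [if_neg h]
        have : e ≠ ((u:ℕ),(a:ℕ)) := fun e' => hnua (e' ▸ he.1)
        rw [if_neg this]
  -- simulation N' → N
  have hsim : ∀ x y, N'.Reach x y → N.Reach x y := by
    intro x y h
    induction h with
    | refl => exact Relation.ReflTransGen.refl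
    | tail h1 h2 ih =>
      rcases (hAmem _).1 h2 with e | ⟨hA, _⟩
      · injection e with e1 e2
        rw [e1] at ih
        rw [e2]
        exact (ih.tail hup).tail hpa
      · exact ih.tail hA
  have hacy' : N'.Acyclic := by
    intro x y hxy hyx'
    have hyx := hsim _ _ hyx'
    rcases (hAmem _).1 hxy with e | ⟨hA, _⟩
    · injection e with e1 e2
      rw [e1, e2] at hyx
      exact hac p a hpa (hyx.tail hup)
    · exact hac x y hA hyx
  -- simulation N → N'
  have key : ∀ t, t ∈ VV → ∀ s, N.Reach s t →
      (s ∈ VV → N'.Reach s t) ∧ (s = p → N'.Reach a t) ∧ (s = b → False) := by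
    intro t ht s hreach
    have htb : t ≠ b := ((hVmem t).1 ht).2.1
    have htp : t ≠ p := ((hVmem t).1 ht).2.2
    refine Relation.ReflTransGen.head_induction_on hreach
      ⟨fun _ => Relation.ReflTransGen.refl, fun e => absurd e htp, fun e => absurd e htb⟩ ?_
    intro s' c hsc hct ih
    by_cases hcb : c = b
    · subst hcb
      exact absurd (reach_of_outdeg_zero hct hb.2) htb
    by_cases hcp : c = p
    · subst hcp
      have hsu : s' = u := hparent_p s' hsc
      have hat : N'.Reach a t := ih.2.1 rfl
      have hua' : ((u:ℕ),(a:ℕ)) ∈ N'.A := by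
        rw [hA'eq, hAA]; exact Finset.mem_insert_self _ _
      exact ⟨fun _ => Relation.ReflTransGen.head (by rw [hsu]; exact hua') hat,
        fun e => absurd (hsu.symm.trans e) hup_ne,
        fun e => absurd (hsu.symm.trans e) hub_ne⟩
    · have hcV : c ∈ N.V := (N.mem_V _ hsc).2
      have hcVV : c ∈ VV := (hVmem c).2 ⟨hcV, hcb, hcp⟩
      have hct' : N'.Reach c t := ih.1 hcVV
      refine ⟨?_, ?_, ?_⟩
      · intro hs
        have hsp : s' ≠ p := ((hVmem s').1 hs).2.2
        have harc : (s', c) ∈ N'.A := by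
          rw [hA'eq]
          exact (hAmem _).2 (Or.inr ⟨hsc, fun h => hcp (Prod.ext_iff.1 h).2,
            fun h => hsp (Prod.ext_iff.1 h).1, fun h => hsp (Prod.ext_iff.1 h).1⟩)
        exact Relation.ReflTransGen.head harc hct'
      · intro e; subst e
        rcases hchild_p c hsc with rfl | rfl
        · exact hct'
        · exact absurd rfl hcb
      · intro e; subst e
        exact outdeg_zero_not_arc hb.2 hsc
  -- Goodness
  have hgood : Good N' := by
    refine ⟨hacy', ?_, ?_, ?_⟩
    · obtain ⟨ρ, hρV, hρin, hρout, hρreach⟩ := hg.root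
      have hρp : ρ ≠ p := fun e => by rw [e] at hρin; omega
      have hρb : ρ ≠ b := fun e => by rw [e] at hρout; have := hb.2; omega
      have hρVV : ρ ∈ VV := (hVmem ρ).2 ⟨hρV, hρb, hρp⟩
      refine ⟨ρ, hρVV, ?_, ?_, ?_⟩
      · rw [hind ρ hρp hρb]; exact hρin
      · rw [houtd ρ hρp hρb]; exact hρout
      · intro v hv
        exact (key v hv ρ (hρreach v ((hVmem v).1 hv).1)).1 hρVV
    · intro v hv
      rw [hV'eq] at hv
      obtain ⟨hvV, hvb, hvp⟩ := (hVmem v).1 hv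
      rw [hind v hvp hvb, houtd v hvp hvb]
      exact hg.degrees v hvV
    · intro v hv hvout
      rw [hV'eq] at hv
      obtain ⟨hvV, hvb, hvp⟩ := (hVmem v).1 hv
      rw [houtd v hvp hvb] at hvout
      obtain ⟨w, hvw, hw1⟩ := hg.tc v hvV hvout
      by_cases hwp : w = p
      · subst hwp
        have hvu : v = u := hparent_p v hvw
        subst hvu
        refine ⟨a, ?_, ?_⟩
        · rw [hA'eq, hAA]; exact Finset.mem_insert_self _ _
        · rw [hind a (fun e => hpa_ne e.symm) hab]; exact hain
      · by_cases hwb : w = b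
        · subst hwb
          exact absurd (hparent_b v hvw) hvp
        · refine ⟨w, ?_, ?_⟩
          · rw [hA'eq]
            exact (hAmem _).2 (Or.inr ⟨hvw, fun h => hwp (Prod.ext_iff.1 h).2,
              fun h => hvp (Prod.ext_iff.1 h).1, fun h => hvp (Prod.ext_iff.1 h).1⟩)
          · rw [hind w hwp hwb]; exact hw1
  refine ⟨⟨⟨hab, ha, hb, p, hpa, hpb⟩, p, hpa, hpb, Or.inr ⟨u, hup, hVV, hAA⟩⟩, hgood, ?_⟩
  have h1 : (N.V.erase b).card = N.V.card - 1 := Finset.card_erase_of_mem hbV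
  have hp' : p ∈ N.V.erase b := Finset.mem_erase.2 ⟨hpb_ne, hpV⟩
  have h2 : ((N.V.erase b).erase p).card = (N.V.erase b).card - 1 :=
    Finset.card_erase_of_mem hp'
  have h3 : 0 < (N.V.erase b).card := Finset.card_pos.2 ⟨p, hp'⟩
  show VV.card < N.V.card
  rw [hVV]
  omega

end Digraph'
namespace Digraph'

variable {N : Digraph'}

lemma cut_good (hg : Good N) {a b pa pb ua q : ℕ} (hab : a ≠ b) (ha : N.IsLeaf a)
    (hb : N.IsLeaf b) (hpaa : (pa,a) ∈ N.A) (hpbb : (pb,b) ∈ N.A)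
    (hpbin : N.inDeg pb = 2) (hpapb : (pa,pb) ∈ N.A) (hua : (ua,pa) ∈ N.A)
    (hq : (q,pb) ∈ N.A) (hqpa : q ≠ pa) :
    ∃ N', N.CutRetCherry N' a b ∧ Good N' ∧ N'.V.card < N.V.card := by
  classical
  have hac := hg.acyclic
  have haV : a ∈ N.V := ha.1
  have hbV : b ∈ N.V := hb.1
  have hpaV : pa ∈ N.V := (N.mem_V _ hpaa).1
  have hpbV : pb ∈ N.V := (N.mem_V _ hpbb).1
  have huaV : ua ∈ N.V := (N.mem_V _ hua).1
  have hqV : q ∈ N.V := (N.mem_V _ hq).1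
  have hpapb_ne : pa ≠ pb := arc_ne hac hpapb
  have huapa_ne : ua ≠ pa := arc_ne hac hua
  have hqpb_ne : q ≠ pb := arc_ne hac hq
  have hpaa_ne : pa ≠ a := arc_ne hac hpaa
  have hpbb_ne : pb ≠ b := arc_ne hac hpbb
  have hapb_ne : a ≠ pb := fun e => outdeg_zero_not_arc ha.2 (e ▸ hpbb)
  have huapb_ne : ua ≠ pb := fun e => hac pa pb hpapb (arc_reach (e ▸ hua))
  have huaa_ne : ua ≠ a := fun e => outdeg_zero_not_arc ha.2 (e ▸ hua)
  have huab_ne : ua ≠ b := fun e => outdeg_zero_not_arc hb.2 (e ▸ hua)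
  have hqa_ne : q ≠ a := fun e => outdeg_zero_not_arc ha.2 (e ▸ hq)
  have hqb_ne : q ≠ b := fun e => outdeg_zero_not_arc hb.2 (e ▸ hq)
  have hbpa_ne : b ≠ pa := fun e => outdeg_zero_not_arc hb.2 (e ▸ hpapb)
  have hain : N.inDeg a = 1 := by
    rcases hg.degrees a haV with ⟨h1,h2⟩|⟨h1,h2⟩|⟨h1,h2⟩|⟨h1,h2⟩ <;> (have := ha.2; omega)
  have hbin : N.inDeg b = 1 := by
    rcases hg.degrees b hbV with ⟨h1,h2⟩|⟨h1,h2⟩|⟨h1,h2⟩|⟨h1,h2⟩ <;> (have := hb.2; omega)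
  have hpaout : N.outDeg pa = 2 := by
    rcases hg.degrees pa hpaV with ⟨h1,h2⟩|⟨h1,h2⟩|⟨h1,h2⟩|⟨h1,h2⟩
    · exact h2
    · exact (outdeg_zero_not_arc h2 hpaa).elim
    · exact h2
    · exfalso
      obtain ⟨c,hc,huniq⟩ := outdeg_one_child h2
      exact hapb_ne ((huniq a hpaa).trans (huniq pb hpapb).symm)
  have hpain : N.inDeg pa = 1 := by
    rcases hg.degrees pa hpaV with ⟨h1,h2⟩|⟨h1,h2⟩|⟨h1,h2⟩|⟨h1,h2⟩
    · exact (indeg_zero_not_arc h1 hua).elim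
    · omega
    · exact h1
    · omega
  have hpbout : N.outDeg pb = 1 := by
    rcases hg.degrees pb hpbV with ⟨h1,h2⟩|⟨h1,h2⟩|⟨h1,h2⟩|⟨h1,h2⟩ <;> omega
  have hchild_pa : ∀ c, (pa,c) ∈ N.A → c = a ∨ c = pb := by
    obtain ⟨a', b', hab', ha', hb', huniq⟩ := outdeg_two_children hpaout
    intro c hc
    have h1 := huniq c hc
    have h2 := huniq a hpaa
    have h3 := huniq pb hpapb
    omega
  have hchild_pb : ∀ c, (pb,c) ∈ N.A → c = b := by
    obtain ⟨c0, _, huniq⟩ := outdeg_one_child hpbout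
    intro c hc; rw [huniq c hc, ← huniq b hpbb]
  have hparent_pa : ∀ x, (x,pa) ∈ N.A → x = ua := by
    obtain ⟨p0, _, huniq⟩ := indeg_one_parent hpain
    intro x hx; rw [huniq x hx, ← huniq ua hua]
  have hparent_pb : ∀ x, (x,pb) ∈ N.A → x = pa ∨ x = q := by
    obtain ⟨p1, p2, hp12, hp1, hp2, huniq⟩ := indeg_two_parents hpbin
    intro x hx
    have h1 := huniq x hx
    have h2 := huniq pa hpapb
    have h3 := huniq q hq
    omega
  have hparent_a : ∀ x, (x,a) ∈ N.A → x = pa := by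
    obtain ⟨p0, _, huniq⟩ := indeg_one_parent hain
    intro x hx; rw [huniq x hx, ← huniq pa hpaa]
  have hparent_b : ∀ x, (x,b) ∈ N.A → x = pb := by
    obtain ⟨p0, _, huniq⟩ := indeg_one_parent hbin
    intro x hx; rw [huniq x hx, ← huniq pb hpbb]
  have hnuaa : (ua,a) ∉ N.A := fun h => huapa_ne (hparent_a ua h)
  have hnqb : (q,b) ∉ N.A := fun h => hqpb_ne (hparent_b q h)
  set VV := (N.V.erase pa).erase pb with hVV
  set AA := insert (ua, a) (insert (q, b)
      (((((N.A.erase (pa, pb)).erase (ua, pa)).erase (pa, a)).erase (q, pb)).erase (pb, b)))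
    with hAA
  have hVmem : ∀ x, x ∈ VV ↔ (x ∈ N.V ∧ x ≠ pa ∧ x ≠ pb) := by
    intro x; rw [hVV]; simp [Finset.mem_erase]; tauto
  have hAmem : ∀ e : ℕ × ℕ, e ∈ AA ↔
      (e = (ua,a) ∨ e = (q,b) ∨ (e ∈ N.A ∧ e ≠ (pa,pb) ∧ e ≠ (ua,pa) ∧ e ≠ (pa,a) ∧
        e ≠ (q,pb) ∧ e ≠ (pb,b))) := by
    intro e; rw [hAA]; simp [Finset.mem_insert, Finset.mem_erase]; tauto
  have hmemV : ∀ e ∈ AA, e.1 ∈ VV ∧ e.2 ∈ VV := by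
    intro e he
    rcases (hAmem _).1 he with rfl | rfl | ⟨heA, h1, h2, h3, h4, h5⟩
    · exact ⟨(hVmem ua).2 ⟨huaV, huapa_ne, huapb_ne⟩,
        (hVmem a).2 ⟨haV, fun e => hpaa_ne e.symm, hapb_ne⟩⟩
    · exact ⟨(hVmem q).2 ⟨hqV, hqpa, hqpb_ne⟩,
        (hVmem b).2 ⟨hbV, hbpa_ne, fun e => hpbb_ne e.symm⟩⟩
    · obtain ⟨x, y⟩ := e
      constructor
      · refine (hVmem x).2 ⟨(N.mem_V _ heA).1, ?_, ?_⟩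
        · intro e; subst e
          rcases hchild_pa y heA with rfl | rfl
          · exact h3 rfl
          · exact h1 rfl
        · intro e; subst e
          exact h5 (by rw [hchild_pb y heA])
      · refine (hVmem y).2 ⟨(N.mem_V _ heA).2, ?_, ?_⟩
        · intro e; subst e
          exact h2 (by rw [hparent_pa x heA])
        · intro e; subst e
          rcases hparent_pb x heA with rfl | rfl
          · exact h1 rfl
          · exact h4 rfl
  refine ⟨⟨VV, AA, hmemV⟩, ?_⟩
  set N' : Digraph' := ⟨VV, AA, hmemV⟩ with hN'
  have hV'eq : N'.V = VV := rfl
  have hA'eq : N'.A = AA := rfl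
  have hqpb_pair : ((q:ℕ),(pb:ℕ)) ≠ (ua,pa) := fun h => hpapb_ne.symm (Prod.ext_iff.1 h).2
  have hqb_pair : ((q:ℕ),(b:ℕ)) ≠ (ua,a) := fun h => hab.symm (Prod.ext_iff.1 h).2
  have hpbb_pair : ((pb:ℕ),(b:ℕ)) ≠ (pa,a) := fun h => hpapb_ne.symm (Prod.ext_iff.1 h).1
  have houtd : ∀ v, v ≠ pa → v ≠ pb → N'.outDeg v = N.outDeg v := by
    intro v hvpa hvpb
    unfold outDeg
    rw [hA'eq]
    apply Finset.card_bij'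
      (fun f _ => if f = ((ua:ℕ),(a:ℕ)) then (ua,pa) else if f = ((q:ℕ),(b:ℕ)) then (q,pb) else f)
      (fun e _ => if e = ((ua:ℕ),(pa:ℕ)) then (ua,a) else if e = ((q:ℕ),(pb:ℕ)) then (q,b) else e)
    · intro f hf
      rw [Finset.mem_filter] at hf ⊢
      by_cases h1 : f = ((ua:ℕ),(a:ℕ))
      · subst h1; rw [if_pos rfl]; exact ⟨hua, hf.2⟩
      · rw [if_neg h1]
        by_cases h2 : f = ((q:ℕ),(b:ℕ))
        · subst h2; rw [if_pos rfl]; exact ⟨hq, hf.2⟩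
        · rw [if_neg h2]
          rcases (hAmem _).1 hf.1 with e | e | ⟨heA, _⟩
          · exact absurd e h1
          · exact absurd e h2
          · exact ⟨heA, hf.2⟩
    · intro e he
      rw [Finset.mem_filter] at he ⊢
      by_cases h1 : e = ((ua:ℕ),(pa:ℕ))
      · subst h1; rw [if_pos rfl]
        exact ⟨(hAmem _).2 (Or.inl rfl), he.2⟩
      · rw [if_neg h1]
        by_cases h2 : e = ((q:ℕ),(pb:ℕ))
        · subst h2; rw [if_pos rfl]
          exact ⟨(hAmem _).2 (Or.inr (Or.inl rfl)), he.2⟩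
        · rw [if_neg h2]
          refine ⟨(hAmem _).2 (Or.inr (Or.inr ⟨he.1, ?_, h1, ?_, h2, ?_⟩)), he.2⟩
          · intro e'; subst e'; exact hvpa he.2.symm
          · intro e'; subst e'; exact hvpa he.2.symm
          · intro e'; subst e'; exact hvpb he.2.symm
    · intro f hf
      rw [Finset.mem_filter] at hf
      by_cases h1 : f = ((ua:ℕ),(a:ℕ))
      · subst h1; rw [if_pos rfl, if_pos rfl]
      · rw [if_neg h1]
        by_cases h2 : f = ((q:ℕ),(b:ℕ))
        · subst h2; rw [if_pos rfl, if_neg hqpb_pair, if_pos rfl]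
        · rw [if_neg h2]
          rcases (hAmem _).1 hf.1 with e | e | ⟨_, _, h3, _, h4, _⟩
          · exact absurd e h1
          · exact absurd e h2
          · rw [if_neg h3, if_neg h4]
    · intro e he
      rw [Finset.mem_filter] at he
      by_cases h1 : e = ((ua:ℕ),(pa:ℕ))
      · subst h1; rw [if_pos rfl, if_pos rfl]
      · rw [if_neg h1]
        by_cases h2 : e = ((q:ℕ),(pb:ℕ))
        · subst h2; rw [if_pos rfl, if_neg hqb_pair, if_pos rfl]
        · rw [if_neg h2]
          have h3 : e ≠ ((ua:ℕ),(a:ℕ)) := fun e' => hnuaa (e' ▸ he.1)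
          have h4 : e ≠ ((q:ℕ),(b:ℕ)) := fun e' => hnqb (e' ▸ he.1)
          rw [if_neg h3, if_neg h4]
  have hind : ∀ v, v ≠ pa → v ≠ pb → N'.inDeg v = N.inDeg v := by
    intro v hvpa hvpb
    unfold inDeg
    rw [hA'eq]
    apply Finset.card_bij'
      (fun f _ => if f = ((ua:ℕ),(a:ℕ)) then (pa,a) else if f = ((q:ℕ),(b:ℕ)) then (pb,b) else f)
      (fun e _ => if e = ((pa:ℕ),(a:ℕ)) then (ua,a) else if e = ((pb:ℕ),(b:ℕ)) then (q,b) else e)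
    · intro f hf
      rw [Finset.mem_filter] at hf ⊢
      by_cases h1 : f = ((ua:ℕ),(a:ℕ))
      · subst h1; rw [if_pos rfl]; exact ⟨hpaa, hf.2⟩
      · rw [if_neg h1]
        by_cases h2 : f = ((q:ℕ),(b:ℕ))
        · subst h2; rw [if_pos rfl]; exact ⟨hpbb, hf.2⟩
        · rw [if_neg h2]
          rcases (hAmem _).1 hf.1 with e | e | ⟨heA, _⟩
          · exact absurd e h1
          · exact absurd e h2
          · exact ⟨heA, hf.2⟩
    · intro e he
      rw [Finset.mem_filter] at he ⊢
      by_cases h1 : e = ((pa:ℕ),(a:ℕ))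
      · subst h1; rw [if_pos rfl]
        exact ⟨(hAmem _).2 (Or.inl rfl), he.2⟩
      · rw [if_neg h1]
        by_cases h2 : e = ((pb:ℕ),(b:ℕ))
        · subst h2; rw [if_pos rfl]
          exact ⟨(hAmem _).2 (Or.inr (Or.inl rfl)), he.2⟩
        · rw [if_neg h2]
          refine ⟨(hAmem _).2 (Or.inr (Or.inr ⟨he.1, ?_, ?_, h1, ?_, h2⟩)), he.2⟩
          · intro e'; subst e'; exact hvpb he.2.symm
          · intro e'; subst e'; exact hvpa he.2.symm
          · intro e'; subst e'; exact hvpb he.2.symm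
    · intro f hf
      rw [Finset.mem_filter] at hf
      by_cases h1 : f = ((ua:ℕ),(a:ℕ))
      · subst h1; rw [if_pos rfl, if_pos rfl]
      · rw [if_neg h1]
        by_cases h2 : f = ((q:ℕ),(b:ℕ))
        · subst h2; rw [if_pos rfl, if_neg hpbb_pair, if_pos rfl]
        · rw [if_neg h2]
          rcases (hAmem _).1 hf.1 with e | e | ⟨_, _, _, h3, _, h4⟩
          · exact absurd e h1
          · exact absurd e h2
          · rw [if_neg h3, if_neg h4]
    · intro e he
      rw [Finset.mem_filter] at he
      by_cases h1 : e = ((pa:ℕ),(a:ℕ))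
      · subst h1; rw [if_pos rfl, if_pos rfl]
      · rw [if_neg h1]
        by_cases h2 : e = ((pb:ℕ),(b:ℕ))
        · subst h2; rw [if_pos rfl, if_neg hqb_pair, if_pos rfl]
        · rw [if_neg h2]
          have h3 : e ≠ ((ua:ℕ),(a:ℕ)) := fun e' => hnuaa (e' ▸ he.1)
          have h4 : e ≠ ((q:ℕ),(b:ℕ)) := fun e' => hnqb (e' ▸ he.1)
          rw [if_neg h3, if_neg h4]
  have hsim : ∀ x y, N'.Reach x y → N.Reach x y := by
    intro x y h
    induction h with
    | refl => exact Relation.ReflTransGen.refl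
    | tail h1 h2 ih =>
      rcases (hAmem _).1 h2 with e | e | ⟨hA, _⟩
      · injection e with e1 e2
        rw [e1] at ih
        rw [e2]
        exact (ih.tail hua).tail hpaa
      · injection e with e1 e2
        rw [e1] at ih
        rw [e2]
        exact (ih.tail hq).tail hpbb
      · exact ih.tail hA
  have hacy' : N'.Acyclic := by
    intro x y hxy hyx'
    have hyx := hsim _ _ hyx'
    rcases (hAmem _).1 hxy with e | e | ⟨hA, _⟩
    · injection e with e1 e2
      rw [e1, e2] at hyx
      exact hac pa a hpaa (hyx.tail hua)
    · injection e with e1 e2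
      rw [e1, e2] at hyx
      exact hac pb b hpbb (hyx.tail hq)
    · exact hac x y hA hyx
  have key : ∀ t, t ∈ VV → t ≠ b → ∀ s, N.Reach s t →
      (s ∈ VV → N'.Reach s t) ∧ (s = pa → N'.Reach a t) ∧ (s = pb → False) := by
    intro t ht htb s hreach
    have htpa : t ≠ pa := ((hVmem t).1 ht).2.1
    have htpb : t ≠ pb := ((hVmem t).1 ht).2.2
    refine Relation.ReflTransGen.head_induction_on hreach
      ⟨fun _ => Relation.ReflTransGen.refl, fun e => absurd e htpa, fun e => absurd e htpb⟩ ?_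
    intro s' c hsc hct ih
    by_cases hcb : c = b
    · subst hcb
      exact absurd (reach_of_outdeg_zero hct hb.2) htb
    by_cases hcpb : c = pb
    · subst hcpb
      exact (ih.2.2 rfl).elim
    by_cases hcpa : c = pa
    · subst hcpa
      have hsu : s' = ua := hparent_pa s' hsc
      have hat : N'.Reach a t := ih.2.1 rfl
      have hua' : ((ua:ℕ),(a:ℕ)) ∈ N'.A := by
        rw [hA'eq, hAA]; exact Finset.mem_insert_self _ _
      exact ⟨fun _ => Relation.ReflTransGen.head (by rw [hsu]; exact hua') hat,
        fun e => absurd (hsu.symm.trans e) huapa_ne,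
        fun e => absurd (hsu.symm.trans e) huapb_ne⟩
    · have hcV : c ∈ N.V := (N.mem_V _ hsc).2
      have hcVV : c ∈ VV := (hVmem c).2 ⟨hcV, hcpa, hcpb⟩
      have hct' : N'.Reach c t := ih.1 hcVV
      refine ⟨?_, ?_, ?_⟩
      · intro hs
        obtain ⟨_, hspa, hspb⟩ := (hVmem s').1 hs
        have harc : (s', c) ∈ N'.A := by
          rw [hA'eq]
          exact (hAmem _).2 (Or.inr (Or.inr ⟨hsc, fun h => hcpb (Prod.ext_iff.1 h).2,
            fun h => hcpa (Prod.ext_iff.1 h).2, fun h => hspa (Prod.ext_iff.1 h).1,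
            fun h => hcpb (Prod.ext_iff.1 h).2, fun h => hspb (Prod.ext_iff.1 h).1⟩))
        exact Relation.ReflTransGen.head harc hct'
      · intro e; subst e
        rcases hchild_pa c hsc with rfl | rfl
        · exact hct'
        · exact absurd rfl hcpb
      · intro e; subst e
        exact absurd (hchild_pb c hsc) hcb
  have hgood : Good N' := by
    refine ⟨hacy', ?_, ?_, ?_⟩
    · obtain ⟨ρ, hρV, hρin, hρout, hρreach⟩ := hg.root
      have hρpa : ρ ≠ pa := fun e => by rw [e] at hρin; omega
      have hρpb : ρ ≠ pb := fun e => by rw [e] at hρin; omega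
      have hρVV : ρ ∈ VV := (hVmem ρ).2 ⟨hρV, hρpa, hρpb⟩
      refine ⟨ρ, hρVV, ?_, ?_, ?_⟩
      · rw [hind ρ hρpa hρpb]; exact hρin
      · rw [houtd ρ hρpa hρpb]; exact hρout
      · intro v hv
        by_cases hvb : v = b
        · rw [hvb]
          have hqVV : q ∈ VV := (hVmem q).2 ⟨hqV, hqpa, hqpb_ne⟩
          have hq' : N'.Reach ρ q := (key q hqVV hqb_ne ρ (hρreach q hqV)).1 hρVV
          have harc : ((q:ℕ),(b:ℕ)) ∈ N'.A := by
            rw [hA'eq, hAA]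
            exact Finset.mem_insert_of_mem (Finset.mem_insert_self _ _)
          exact hq'.tail harc
        · exact (key v hv hvb ρ (hρreach v ((hVmem v).1 hv).1)).1 hρVV
    · intro v hv
      rw [hV'eq] at hv
      obtain ⟨hvV, hvpa, hvpb⟩ := (hVmem v).1 hv
      rw [hind v hvpa hvpb, houtd v hvpa hvpb]
      exact hg.degrees v hvV
    · intro v hv hvout
      rw [hV'eq] at hv
      obtain ⟨hvV, hvpa, hvpb⟩ := (hVmem v).1 hv
      rw [houtd v hvpa hvpb] at hvout
      obtain ⟨w, hvw, hw1⟩ := hg.tc v hvV hvout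
      by_cases hwpa : w = pa
      · subst hwpa
        have hvu : v = ua := hparent_pa v hvw
        refine ⟨a, ?_, ?_⟩
        · rw [hA'eq, hAA, hvu]; exact Finset.mem_insert_self _ _
        · rw [hind a (fun e => hpaa_ne e.symm) hapb_ne]; exact hain
      · by_cases hwpb : w = pb
        · subst hwpb; omega
        · refine ⟨w, ?_, ?_⟩
          · rw [hA'eq]
            exact (hAmem _).2 (Or.inr (Or.inr ⟨hvw, fun h => hwpb (Prod.ext_iff.1 h).2,
              fun h => hwpa (Prod.ext_iff.1 h).2, fun h => hvpa (Prod.ext_iff.1 h).1,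
              fun h => hwpb (Prod.ext_iff.1 h).2, fun h => hvpb (Prod.ext_iff.1 h).1⟩))
          · rw [hind w hwpa hwpb]; exact hw1
  refine ⟨⟨⟨hab, ha, hb, pa, pb, hpaa, hpbb, hpbin, hpapb⟩,
    pa, pb, ua, q, hpaa, hpbb, hpbin, hpapb, hua, hq, hqpa, hVV, hAA⟩, hgood, ?_⟩
  have h1 : (N.V.erase pa).card = N.V.card - 1 := Finset.card_erase_of_mem hpaV
  have hp' : pb ∈ N.V.erase pa := Finset.mem_erase.2 ⟨fun e => hpapb_ne e.symm, hpbV⟩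
  have h2 : ((N.V.erase pa).erase pb).card = (N.V.erase pa).card - 1 :=
    Finset.card_erase_of_mem hp'
  have h3 : 0 < (N.V.erase pa).card := Finset.card_pos.2 ⟨pb, hp'⟩
  show VV.card < N.V.card
  rw [hVV]
  omega

end Digraph'
namespace Digraph'

variable {N : Digraph'}

lemma reduce_root {a b p : ℕ} (hab : a ≠ b) (ha : N.IsLeaf a) (hb : N.IsLeaf b)
    (hpa : (p,a) ∈ N.A) (hpb : (p,b) ∈ N.A) (h0 : N.inDeg p = 0) : N.IsOrchard := by
  refine ⟨⟨{a}, ∅, by simp⟩, Relation.ReflTransGen.single ?_, a, rfl, rfl⟩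
  exact ⟨a, b, Or.inl ⟨⟨hab, ha, hb, p, hpa, hpb⟩, p, hpa, hpb, Or.inl ⟨h0, rfl, rfl⟩⟩⟩

lemma good_orchard : ∀ n (N : Digraph'), N.V.card ≤ n → Good N → N.IsOrchard := by
  intro n
  induction n with
  | zero =>
    intro N hc hg
    obtain ⟨ρ, hρV, _⟩ := hg.root
    have := Finset.card_pos.2 ⟨ρ, hρV⟩
    omega
  | succ n ih =>
    intro N hc hg
    rcases exists_cherry hg with
      ⟨a,b,p,hab,ha,hb,hpa,hpb,hcase⟩ | ⟨a,b,pa,pb,ua,q,hab,ha,hb,h1,h2,h3,h4,h5,h6,h7⟩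
    · rcases hcase with h0 | ⟨u, hup⟩
      · exact reduce_root hab ha hb hpa hpb h0
      · obtain ⟨N', hred, hgood, hlt⟩ := reduce_good hg hab ha hb hpa hpb hup
        obtain ⟨N'', hsteps, hsingle⟩ := ih N' (by omega) hgood
        exact ⟨N'', Relation.ReflTransGen.head ⟨a, b, Or.inl hred⟩ hsteps, hsingle⟩
    · obtain ⟨N', hcut, hgood, hlt⟩ := cut_good hg hab ha hb h1 h2 h3 h4 h5 h6 h7
      obtain ⟨N'', hsteps, hsingle⟩ := ih N' (by omega) hgood
      exact ⟨N'', Relation.ReflTransGen.head ⟨a, b, Or.inr hcut⟩ hsteps, hsingle⟩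

end Digraph'

open Digraph'

/-- every tree-child phylogenetic network is an orchard network. -/
theorem stmt_9 (N : Digraph') (X : Finset ℕ)
    (h : N.IsPhylo X) (htc : N.TreeChild) :
    N.IsOrchard := by
  exact good_orchard N.V.card N le_rfl ⟨h.acyclic, h.root, h.degrees, htc⟩
end

section
/- Every tree-child phylogenetic network with n leaves has at most n − 1 reticulation vertices. -/
open Digraph'

/-- The "tree arc into an in-degree-1 vertex" relation. -/
def TR (N : Digraph') (u v : ℕ) : Prop := (u, v) ∈ N.A ∧ N.inDeg v = 1

/-- Backward determinism: an in-degree-1 vertex has a unique parent. -/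
lemma back_det (N : Digraph') {a b c : ℕ} (ha : (a, c) ∈ N.A) (hb : (b, c) ∈ N.A)
    (hc : N.inDeg c = 1) : a = b := by
  rw [inDeg, Finset.card_eq_one] at hc
  obtain ⟨x, hx⟩ := hc
  have h1 : (a, c) ∈ N.A.filter (fun e => e.2 = c) := by simp [ha]
  have h2 : (b, c) ∈ N.A.filter (fun e => e.2 = c) := by simp [hb]
  rw [hx, Finset.mem_singleton] at h1 h2
  exact congrArg Prod.fst (h1.trans h2.symm)

/-- Two tree paths into the same vertex are comparable. -/
lemma tr_comp (N : Digraph') : ∀ {v l : ℕ}, Relation.ReflTransGen (TR N) v l →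
    ∀ {u : ℕ}, Relation.ReflTransGen (TR N) u l →
      Relation.ReflTransGen (TR N) u v ∨ Relation.ReflTransGen (TR N) v u := by
  intro v l hv
  induction hv with
  | refl => intro u hu; exact Or.inl hu
  | @tail b c hvb hbc ih =>
    intro u hu
    rcases hu.cases_tail with rfl | ⟨d, hud, hdc⟩
    · exact Or.inr (hvb.tail hbc)
    · have : d = b := back_det N hdc.1 hbc.1 hbc.2
      subst this
      exact ih hud

lemma tr_inj (N : Digraph') {u v l : ℕ} (hu : Relation.ReflTransGen (TR N) u l)
    (hv : Relation.ReflTransGen (TR N) v l)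
    (hu1 : N.inDeg u ≠ 1) (hv1 : N.inDeg v ≠ 1) : u = v := by
  have key : ∀ {a b : ℕ}, Relation.ReflTransGen (TR N) a b → N.inDeg b ≠ 1 → a = b := by
    intro a b hab hb
    rcases hab.cases_tail with rfl | ⟨d, _, hdb⟩
    · rfl
    · exact absurd hdb.2 hb
  rcases tr_comp N hv hu with h | h
  · exact key h hv1
  · exact (key h hu1).symm

/-- In a tree-child network, every vertex has a tree path to a leaf. -/
lemma exists_tr_leaf (N : Digraph') (hac : N.Acyclic) (htc : N.TreeChild) :
    ∀ v ∈ N.V, ∃ l, l ∈ N.V ∧ N.outDeg l = 0 ∧ Relation.ReflTransGen (TR N) v l := by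
  classical
  suffices H : ∀ n : ℕ, ∀ v ∈ N.V,
      (N.V.filter (fun u => N.Reach v u)).card ≤ n →
      ∃ l, l ∈ N.V ∧ N.outDeg l = 0 ∧ Relation.ReflTransGen (TR N) v l by
    intro v hv
    exact H _ v hv le_rfl
  intro n
  induction n with
  | zero =>
    intro v hv hcard
    exfalso
    have : v ∈ N.V.filter (fun u => N.Reach v u) := by
      exact Finset.mem_filter.mpr ⟨hv, Relation.ReflTransGen.refl⟩
    have := Finset.card_pos.mpr ⟨v, this⟩
    omega
  | succ n ih =>
    intro v hv hcard
    by_cases hout : N.outDeg v = 0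
    · exact ⟨v, hv, hout, Relation.ReflTransGen.refl⟩
    · obtain ⟨w, hvw, hw1⟩ := htc v hv hout
      have hwV : w ∈ N.V := (N.mem_V _ hvw).2
      have hsub : N.V.filter (fun u => N.Reach w u) ⊆ N.V.filter (fun u => N.Reach v u) := by
        intro u hu
        rw [Finset.mem_filter] at hu ⊢
        exact ⟨hu.1, Relation.ReflTransGen.head hvw hu.2⟩
      have hvmem : v ∈ N.V.filter (fun u => N.Reach v u) := by
        exact Finset.mem_filter.mpr ⟨hv, Relation.ReflTransGen.refl⟩
      have hvnot : v ∉ N.V.filter (fun u => N.Reach w u) := by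
        rw [Finset.mem_filter]
        rintro ⟨-, hr⟩
        exact hac v w hvw hr
      have hss : N.V.filter (fun u => N.Reach w u) ⊂ N.V.filter (fun u => N.Reach v u) :=
        Finset.ssubset_iff_of_subset hsub |>.mpr ⟨v, hvmem, hvnot⟩
      have hlt : (N.V.filter (fun u => N.Reach w u)).card <
          (N.V.filter (fun u => N.Reach v u)).card := Finset.card_lt_card hss
      obtain ⟨l, hlV, hl0, hltr⟩ := ih w hwV (by omega)
      exact ⟨l, hlV, hl0, Relation.ReflTransGen.head ⟨hvw, hw1⟩ hltr⟩

/-- a tree-child phylogenetic network with `n` leaves has at most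
`n - 1` reticulations. -/
theorem stmt_10 (N : Digraph') (X : Finset ℕ)
    (h : N.IsPhylo X) (htc : N.TreeChild) :
    (N.V.filter (fun v => N.inDeg v = 2 ∧ N.outDeg v = 1)).card ≤ X.card - 1 := by
  classical
  obtain ⟨ρ, hρV, hρin, hρout, hρreach⟩ := h.root
  set S := N.V.filter (fun v => N.inDeg v = 2 ∧ N.outDeg v = 1) with hS
  have hρS : ρ ∉ S := by
    simp only [hS, Finset.mem_filter]
    rintro ⟨-, h2, -⟩
    omega
  set T := insert ρ S with hT
  have hTV : ∀ v ∈ T, v ∈ N.V := by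
    intro v hv
    rcases Finset.mem_insert.mp hv with rfl | hv
    · exact hρV
    · exact (Finset.mem_filter.mp hv).1
  have hT1 : ∀ v ∈ T, N.inDeg v ≠ 1 := by
    intro v hv
    rcases Finset.mem_insert.mp hv with rfl | hv
    · omega
    · have := (Finset.mem_filter.mp hv).2.1
      omega
  have hEx : ∀ v : ℕ, ∃ l : ℕ, v ∈ T →
      l ∈ X ∧ Relation.ReflTransGen (TR N) v l := by
    intro v
    by_cases hv : v ∈ T
    · obtain ⟨l, hlV, hl0, hltr⟩ := exists_tr_leaf N h.acyclic htc v (hTV v hv)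
      exact ⟨l, fun _ => ⟨(h.leafSet l hlV).mp hl0, hltr⟩⟩
    · exact ⟨0, fun hc => absurd hc hv⟩
  choose f hf using hEx
  have hcard : T.card ≤ X.card := by
    apply Finset.card_le_card_of_injOn f
    · intro v hv
      exact (hf v hv).1
    · intro u hu v hv hfe
      have h1 := (hf u hu).2
      have h2 := (hf v hv).2
      rw [hfe] at h1
      exact tr_inj N h1 h2 (hT1 u hu) (hT1 v hv)
  have : T.card = S.card + 1 := Finset.card_insert_of_notMem hρS
  omega
end

section
/- Let N be an orchard network. Then every maximal sequence of cherry reductions applied to N is complete, i.e., terminates in the single-vertex network. Equivalently: if N is an orchard network and N' is obtained from N by applying cherry reductions until neither a cherry nor a reticulated cherry exists, then N' consists of a single vertex. -/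
open Digraph'

namespace Digraph'

theorem deq {N M : Digraph'} (hV : N.V = M.V) (hA : N.A = M.A) : N = M := by
  cases N; cases M; simp_all

lemma two_le_card' {α : Type*} [DecidableEq α] {s : Finset α} {a b : α}
    (ha : a ∈ s) (hb : b ∈ s) (hab : a ≠ b) : 2 ≤ s.card := by
  have hsub : ({a, b} : Finset α) ⊆ s := by
    intro x hx; simp only [Finset.mem_insert, Finset.mem_singleton] at hx
    rcases hx with rfl | rfl <;> assumption
  have h2 : ({a, b} : Finset α).card = 2 := by
    rw [Finset.card_insert_of_notMem (by simp [hab]), Finset.card_singleton]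
  have := Finset.card_le_card hsub
  omega

lemma mem_two_of_card_le {α : Type*} [DecidableEq α] {s : Finset α} {a b c : α}
    (h : s.card ≤ 2) (ha : a ∈ s) (hb : b ∈ s) (hc : c ∈ s) (hab : a ≠ b) :
    c = a ∨ c = b := by
  by_contra hcon
  push_neg at hcon
  have hsub : ({c, a, b} : Finset α) ⊆ s := by
    intro x hx; simp only [Finset.mem_insert, Finset.mem_singleton] at hx
    rcases hx with rfl | rfl | rfl <;> assumption
  have h3 : ({c, a, b} : Finset α).card = 3 := by
    rw [Finset.card_insert_of_notMem (by simp [hcon.1, hcon.2]),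
      Finset.card_insert_of_notMem (by simp [hab]), Finset.card_singleton]
  have := Finset.card_le_card hsub
  omega

lemma parent_unique {N : Digraph'} {v x y : ℕ} (h : N.inDeg v = 1)
    (hx : (x, v) ∈ N.A) (hy : (y, v) ∈ N.A) : x = y := by
  rcases Finset.card_eq_one.mp h with ⟨e, he⟩
  have hx' : (x, v) ∈ N.A.filter (fun e => e.2 = v) := by simp [hx]
  have hy' : (y, v) ∈ N.A.filter (fun e => e.2 = v) := by simp [hy]
  rw [he, Finset.mem_singleton] at hx' hy'
  have := hx'.trans hy'.symm
  exact (Prod.mk.injEq _ _ _ _ ▸ this).1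

lemma child_unique {N : Digraph'} {v x y : ℕ} (h : N.outDeg v = 1)
    (hx : (v, x) ∈ N.A) (hy : (v, y) ∈ N.A) : x = y := by
  rcases Finset.card_eq_one.mp h with ⟨e, he⟩
  have hx' : (v, x) ∈ N.A.filter (fun e => e.1 = v) := by simp [hx]
  have hy' : (v, y) ∈ N.A.filter (fun e => e.1 = v) := by simp [hy]
  rw [he, Finset.mem_singleton] at hx' hy'
  have := hx'.trans hy'.symm
  exact (Prod.mk.injEq _ _ _ _ ▸ this).2

lemma child_eq {N : Digraph'} {p a b x : ℕ} (h : N.outDeg p = 2)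
    (ha : (p, a) ∈ N.A) (hb : (p, b) ∈ N.A) (hab : a ≠ b) (hx : (p, x) ∈ N.A) :
    x = a ∨ x = b := by
  have ha' : (p, a) ∈ N.A.filter (fun e => e.1 = p) := by simp [ha]
  have hb' : (p, b) ∈ N.A.filter (fun e => e.1 = p) := by simp [hb]
  have hx' : (p, x) ∈ N.A.filter (fun e => e.1 = p) := by simp [hx]
  have := mem_two_of_card_le h.le ha' hb' hx' (by simp [hab])
  rcases this with h1 | h1
  · exact Or.inl (congrArg Prod.snd h1)
  · exact Or.inr (congrArg Prod.snd h1)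

lemma second_parent {N : Digraph'} {v x y z : ℕ} (h : N.inDeg v = 2)
    (hx : (x, v) ∈ N.A) (hy : (y, v) ∈ N.A) (hxy : x ≠ y) (hz : (z, v) ∈ N.A)
    (hzx : z ≠ x) : z = y := by
  have hx' : (x, v) ∈ N.A.filter (fun e => e.2 = v) := by simp [hx]
  have hy' : (y, v) ∈ N.A.filter (fun e => e.2 = v) := by simp [hy]
  have hz' : (z, v) ∈ N.A.filter (fun e => e.2 = v) := by simp [hz]
  have := mem_two_of_card_le h.le hx' hy' hz' (by simp [hxy])
  rcases this with h1 | h1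
  · exact absurd (congrArg Prod.fst h1) hzx
  · exact congrArg Prod.fst h1

lemma not_arc_of_outDeg_zero {N : Digraph'} {v x : ℕ} (h : N.outDeg v = 0) :
    (v, x) ∉ N.A := by
  intro hm
  have hm' : (v, x) ∈ N.A.filter (fun e => e.1 = v) := by simp [hm]
  rw [outDeg, Finset.card_eq_zero] at h
  rw [h] at hm'
  exact absurd hm' (Finset.notMem_empty _)

lemma not_arc_of_inDeg_zero {N : Digraph'} {v x : ℕ} (h : N.inDeg v = 0) :
    (x, v) ∉ N.A := by
  intro hm
  have hm' : (x, v) ∈ N.A.filter (fun e => e.2 = v) := by simp [hm]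
  rw [inDeg, Finset.card_eq_zero] at h
  rw [h] at hm'
  exact absurd hm' (Finset.notMem_empty _)

lemma outDeg_pos {N : Digraph'} {v x : ℕ} (h : (v, x) ∈ N.A) : N.outDeg v ≠ 0 :=
  fun h0 => not_arc_of_outDeg_zero h0 h

lemma inDeg_pos {N : Digraph'} {v x : ℕ} (h : (x, v) ∈ N.A) : N.inDeg v ≠ 0 :=
  fun h0 => not_arc_of_inDeg_zero h0 h

lemma reach_leaf {N : Digraph'} {v x : ℕ} (h : N.outDeg v = 0) (hr : N.Reach v x) :
    x = v := by
  rcases Relation.ReflTransGen.cases_head hr with rfl | ⟨c, hc, _⟩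
  · rfl
  · exact absurd hc (not_arc_of_outDeg_zero h)

lemma arc_ne_s11 {N : Digraph'} (hac : N.Acyclic) {x y : ℕ} (h : (x, y) ∈ N.A) :
    x ≠ y := by
  rintro rfl
  exact hac x x h Relation.ReflTransGen.refl

lemma ne_of_out {N : Digraph'} {x y m n : ℕ} (hx : N.outDeg x = m)
    (hy : N.outDeg y = n) (h : m ≠ n) : x ≠ y :=
  fun he => h (by rw [← hx, he, hy])

lemma ne_of_in {N : Digraph'} {x y m n : ℕ} (hx : N.inDeg x = m)
    (hy : N.inDeg y = n) (h : m ≠ n) : x ≠ y :=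
  fun he => h (by rw [← hx, he, hy])

lemma no_step_of_single {N M : Digraph'} (h : IsSingle N) : ¬ CherryStep N M := by
  rintro ⟨a, b, hstep⟩
  rcases h with ⟨x, hV, hA⟩
  rcases hstep with ⟨⟨_, _, _, p, hp, _⟩, _⟩ | ⟨⟨_, _, _, pa, pb, hp, _⟩, _⟩ <;>
    rw [hA] at hp <;> exact absurd hp (Finset.notMem_empty _)

end Digraph'

namespace Digraph'

lemma IsPhylo.leaf_inDeg {N : Digraph'} {X : Finset ℕ} (hph : N.IsPhylo X) {v : ℕ}
    (hv : v ∈ N.V) (h0 : N.outDeg v = 0) : N.inDeg v = 1 := by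
  rcases hph.degrees v hv with ⟨h1, h2⟩ | ⟨h1, h2⟩ | ⟨h1, h2⟩ | ⟨h1, h2⟩ <;> omega

lemma IsPhylo.outDeg_two {N : Digraph'} {X : Finset ℕ} (hph : N.IsPhylo X)
    {p a b : ℕ} (ha : (p, a) ∈ N.A) (hb : (p, b) ∈ N.A) (hab : a ≠ b) :
    N.outDeg p = 2 ∧ N.inDeg p ≤ 1 := by
  have hp : p ∈ N.V := (N.mem_V _ ha).1
  have ha' : (p, a) ∈ N.A.filter (fun e => e.1 = p) := by simp [ha]
  have hb' : (p, b) ∈ N.A.filter (fun e => e.1 = p) := by simp [hb]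
  have h2 : 2 ≤ N.outDeg p := two_le_card' ha' hb' (by simp [hab])
  rcases hph.degrees p hp with ⟨h3, h4⟩ | ⟨h3, h4⟩ | ⟨h3, h4⟩ | ⟨h3, h4⟩ <;>
    constructor <;> omega

lemma IsPhylo.inDeg_zero_unique {N : Digraph'} {X : Finset ℕ} (hph : N.IsPhylo X)
    {v w : ℕ} (hv : v ∈ N.V) (h0 : N.inDeg v = 0) (hw : w ∈ N.V)
    (h0' : N.inDeg w = 0) : v = w := by
  obtain ⟨ρ, hρV, hρ0, hρ2, hρr⟩ := hph.root
  have hv' : v = ρ := by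
    rcases (hρr v hv).cases_tail with rfl | ⟨m, _, harc⟩
    · rfl
    · exact absurd harc (not_arc_of_inDeg_zero h0)
  have hw' : w = ρ := by
    rcases (hρr w hw).cases_tail with rfl | ⟨m, _, harc⟩
    · rfl
    · exact absurd harc (not_arc_of_inDeg_zero h0')
  rw [hv', hw']

lemma IsPhylo.root_cherry_V {N : Digraph'} {X : Finset ℕ} (hph : N.IsPhylo X)
    {p a b : ℕ} (hpa : (p, a) ∈ N.A) (hpb : (p, b) ∈ N.A) (hab : a ≠ b)
    (hla : N.outDeg a = 0) (hlb : N.outDeg b = 0) (h0 : N.inDeg p = 0) :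
    N.V = {p, a, b} := by
  obtain ⟨ρ, hρV, hρ0, hρ2, hρr⟩ := hph.root
  have hpV : p ∈ N.V := (N.mem_V _ hpa).1
  have hpρ : p = ρ := hph.inDeg_zero_unique hpV h0 hρV hρ0
  subst hpρ
  ext v
  simp only [Finset.mem_insert, Finset.mem_singleton]
  constructor
  · intro hv
    rcases Relation.ReflTransGen.cases_head (hρr v hv) with rfl | ⟨c, hc, hcv⟩
    · exact Or.inl rfl
    · rcases child_eq hρ2 hpa hpb hab hc with rfl | rfl
      · exact Or.inr (Or.inl (reach_leaf hla hcv))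
      · exact Or.inr (Or.inr (reach_leaf hlb hcv))
  · rintro (rfl | rfl | rfl)
    · exact hpV
    · exact (N.mem_V _ hpa).2
    · exact (N.mem_V _ hpb).2

/-- If `N` has a cherry at the root, then every cherry step from `N` yields a
single-vertex network. -/
lemma IsPhylo.step_single_of_root {N : Digraph'} {X : Finset ℕ} (hph : N.IsPhylo X)
    {p a b : ℕ} (hpa : (p, a) ∈ N.A) (hpb : (p, b) ∈ N.A) (hab : a ≠ b)
    (hla : N.outDeg a = 0) (hlb : N.outDeg b = 0) (h0 : N.inDeg p = 0) :
    ∀ Z, CherryStep N Z → IsSingle Z := by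
  have hV := hph.root_cherry_V hpa hpb hab hla hlb h0
  rintro Z ⟨c, d, ⟨⟨hcd, hlc, hld, _⟩, p', hp'c, hp'd, hcase⟩ |
    ⟨⟨hcd, hlc, hld, _⟩, pa', pb', ua', q', hpac, hpbd, hin2, _, _, _, _, _, _⟩⟩
  · rcases hcase with ⟨_, hZV, hZA⟩ | ⟨u, hup', _, _⟩
    · exact ⟨c, hZV, hZA⟩
    · exfalso
      have hp'V : p' ∈ N.V := (N.mem_V _ hp'c).1
      rw [hV] at hp'V
      simp only [Finset.mem_insert, Finset.mem_singleton] at hp'V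
      rcases hp'V with rfl | rfl | rfl
      · exact not_arc_of_inDeg_zero h0 hup'
      · exact not_arc_of_outDeg_zero hla hp'c
      · exact not_arc_of_outDeg_zero hlb hp'c
  · exfalso
    have hpbV : pb' ∈ N.V := (N.mem_V _ hpbd).1
    rw [hV] at hpbV
    simp only [Finset.mem_insert, Finset.mem_singleton] at hpbV
    have haV : a ∈ N.V := (N.mem_V _ hpa).2
    have hbV : b ∈ N.V := (N.mem_V _ hpb).2
    rcases hpbV with h | h | h <;> rw [h] at hin2
    · omega
    · have := hph.leaf_inDeg haV hla; omega
    · have := hph.leaf_inDeg hbV hlb; omega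

end Digraph'

namespace Digraph'

lemma card_exchange {α : Type*} [DecidableEq α] {s : Finset α} {x y : α}
    (hx : x ∈ s) (hy : y ∉ s) : (insert y (s.erase x)).card = s.card := by
  rw [Finset.card_insert_of_notMem (fun h => hy (Finset.mem_of_mem_erase h)),
    Finset.card_erase_of_mem hx]
  have := Finset.card_pos.mpr ⟨x, hx⟩
  omega

lemma card_exchange2 {α : Type*} [DecidableEq α] {s : Finset α} {x1 x2 y1 y2 : α}
    (hx1 : x1 ∈ s) (hx2 : x2 ∈ s) (hne : x1 ≠ x2) (hy1 : y1 ∉ s) (hy2 : y2 ∉ s)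
    (hyy : y1 ≠ y2) :
    (insert y1 (insert y2 ((s.erase x1).erase x2))).card = s.card := by
  have hx2' : x2 ∈ s.erase x1 := Finset.mem_erase.mpr ⟨hne.symm, hx2⟩
  have hy2' : y2 ∉ (s.erase x1).erase x2 :=
    fun h => hy2 (Finset.mem_of_mem_erase (Finset.mem_of_mem_erase h))
  have hy1' : y1 ∉ insert y2 ((s.erase x1).erase x2) := by
    simp only [Finset.mem_insert]
    rintro (rfl | h)
    · exact hyy rfl
    · exact hy1 (Finset.mem_of_mem_erase (Finset.mem_of_mem_erase h))
  rw [Finset.card_insert_of_notMem hy1', Finset.card_insert_of_notMem hy2',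
    Finset.card_erase_of_mem hx2', Finset.card_erase_of_mem hx1]
  have := two_le_card' hx1 hx2 hne
  omega

end Digraph'

namespace Digraph'

/-- Context for a non-root cherry reduction. -/
structure RedCtx (N P : Digraph') (X : Finset ℕ) (a b u p : ℕ) : Prop where
  hph : N.IsPhylo X
  hab : a ≠ b
  hla : N.outDeg a = 0
  hlb : N.outDeg b = 0
  hpa : (p, a) ∈ N.A
  hpb : (p, b) ∈ N.A
  hup : (u, p) ∈ N.A
  hPV : P.V = (N.V.erase b).erase p
  hPA : P.A = insert (u, a) (((N.A.erase (u, p)).erase (p, a)).erase (p, b))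

namespace RedCtx

variable {N P : Digraph'} {X : Finset ℕ} {a b u p : ℕ} (C : RedCtx N P X a b u p)
include C

lemma aV : a ∈ N.V := (N.mem_V _ C.hpa).2
lemma bV : b ∈ N.V := (N.mem_V _ C.hpb).2
lemma pV : p ∈ N.V := (N.mem_V _ C.hpa).1
lemma uV : u ∈ N.V := (N.mem_V _ C.hup).1
lemma out2 : N.outDeg p = 2 := (C.hph.outDeg_two C.hpa C.hpb C.hab).1
lemma inp : N.inDeg p = 1 := by
  have h2 := (C.hph.outDeg_two C.hpa C.hpb C.hab).2
  have h1 := inDeg_pos C.hup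
  omega
lemma ina : N.inDeg a = 1 := C.hph.leaf_inDeg C.aV C.hla
lemma inb : N.inDeg b = 1 := C.hph.leaf_inDeg C.bV C.hlb
lemma up_ne : u ≠ p := arc_ne_s11 C.hph.acyclic C.hup
lemma pa_ne : p ≠ a := fun h => outDeg_pos C.hpa (by rw [h]; exact C.hla)
lemma pb_ne : p ≠ b := fun h => outDeg_pos C.hpa (by rw [h]; exact C.hlb)
lemma ua_ne : u ≠ a := fun h => outDeg_pos C.hup (by rw [h]; exact C.hla)
lemma ub_ne : u ≠ b := fun h => outDeg_pos C.hup (by rw [h]; exact C.hlb)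
lemma uaA : (u, a) ∉ N.A := fun h => C.up_ne (parent_unique C.ina h C.hpa)

lemma mem_A {e : ℕ × ℕ} :
    e ∈ P.A ↔ e = (u, a) ∨ (e ∈ N.A ∧ e ≠ (u, p) ∧ e ≠ (p, a) ∧ e ≠ (p, b)) := by
  rw [C.hPA]
  simp only [Finset.mem_insert, Finset.mem_erase]
  tauto

lemma mem_V' {v : ℕ} : v ∈ P.V ↔ v ∈ N.V ∧ v ≠ b ∧ v ≠ p := by
  rw [C.hPV]
  simp only [Finset.mem_erase]
  tauto

lemma inDeg_eq {v : ℕ} (hvb : v ≠ b) (hvp : v ≠ p) : P.inDeg v = N.inDeg v := by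
  by_cases hva : v = a
  · subst hva
    have hfil : P.A.filter (fun e => e.2 = v) = {(u, v)} := by
      ext e
      simp only [Finset.mem_filter, Finset.mem_singleton, C.mem_A]
      constructor
      · rintro ⟨h1 | ⟨hA, h2, h3, h4⟩, h5⟩
        · exact h1
        · exfalso
          have he : e = (e.1, v) := Prod.ext rfl h5
          have : e.1 = p := parent_unique C.ina (he ▸ hA) C.hpa
          exact h3 (by rw [he, this])
      · rintro rfl
        exact ⟨Or.inl rfl, rfl⟩
    rw [inDeg, hfil, Finset.card_singleton, C.ina]
  · have hfil : P.A.filter (fun e => e.2 = v) = N.A.filter (fun e => e.2 = v) := by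
      ext e
      simp only [Finset.mem_filter, C.mem_A]
      constructor
      · rintro ⟨h1 | ⟨hA, h2, h3, h4⟩, h5⟩
        · rw [h1] at h5; exact absurd h5.symm hva
        · exact ⟨hA, h5⟩
      · rintro ⟨hA, h5⟩
        refine ⟨Or.inr ⟨hA, ?_, ?_, ?_⟩, h5⟩
        · rintro rfl; exact hvp h5.symm
        · rintro rfl; exact hva h5.symm
        · rintro rfl; exact hvb h5.symm
    rw [inDeg, inDeg, hfil]


lemma outDeg_eq {v : ℕ} (hvb : v ≠ b) (hvp : v ≠ p) : P.outDeg v = N.outDeg v := by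
  by_cases hvu : v = u
  · subst hvu
    have hfil : P.A.filter (fun e => e.1 = v) =
        insert (v, a) ((N.A.filter (fun e => e.1 = v)).erase (v, p)) := by
      ext e
      simp only [Finset.mem_filter, Finset.mem_insert, Finset.mem_erase, C.mem_A]
      constructor
      · rintro ⟨h1 | ⟨hA, h2, h3, h4⟩, h5⟩
        · exact Or.inl h1
        · exact Or.inr ⟨h2, hA, h5⟩
      · rintro (rfl | ⟨h2, hA, h5⟩)
        · exact ⟨Or.inl rfl, rfl⟩
        · refine ⟨Or.inr ⟨hA, h2, ?_, ?_⟩, h5⟩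
          · rintro rfl; exact C.up_ne h5.symm
          · rintro rfl; exact C.up_ne h5.symm
    rw [outDeg, outDeg, hfil]
    exact card_exchange (by simp [C.hup]) (by simp [C.uaA])
  · have hfil : P.A.filter (fun e => e.1 = v) = N.A.filter (fun e => e.1 = v) := by
      ext e
      simp only [Finset.mem_filter, C.mem_A]
      constructor
      · rintro ⟨h1 | ⟨hA, h2, h3, h4⟩, h5⟩
        · rw [h1] at h5; exact absurd h5.symm hvu
        · exact ⟨hA, h5⟩
      · rintro ⟨hA, h5⟩
        refine ⟨Or.inr ⟨hA, ?_, ?_, ?_⟩, h5⟩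
        · rintro rfl; exact hvu h5.symm
        · rintro rfl; exact hvp h5.symm
        · rintro rfl; exact hvp h5.symm
    rw [outDeg, outDeg, hfil]

lemma reach_sub {x y : ℕ} (h : P.Reach x y) : N.Reach x y := by
  induction h with
  | refl => exact Relation.ReflTransGen.refl
  | tail _ harc ih =>
    rcases C.mem_A.mp harc with heq | ⟨hA, _, _, _⟩
    · obtain ⟨rfl, rfl⟩ := Prod.mk.injEq _ _ _ _ ▸ heq
      exact (ih.tail C.hup).tail C.hpa
    · exact ih.tail hA

lemma acyclic : P.Acyclic := by
  intro x y harc hr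
  rcases C.mem_A.mp harc with heq | ⟨hA, _, _, _⟩
  · have hx : x = u := congrArg Prod.fst heq
    have hy : y = a := congrArg Prod.snd heq
    have hout : P.outDeg a = 0 := by
      rw [C.outDeg_eq C.hab (fun h => C.pa_ne h.symm)]
      exact C.hla
    have hxa : x = a := reach_leaf hout (hy ▸ hr)
    exact C.ua_ne (hx.symm.trans hxa)
  · exact C.hph.acyclic x y hA (C.reach_sub hr)

lemma reach_P {v : ℕ} (hvp : v ≠ p) (hvb : v ≠ b) :
    ∀ {x : ℕ}, N.Reach x v → x ≠ p → x ≠ b → P.Reach x v := by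
  intro x hr
  induction hr using Relation.ReflTransGen.head_induction_on with
  | refl => intro _ _; exact Relation.ReflTransGen.refl
  | @head w c harc hrest ih =>
    intro hxp hxb
    by_cases hcp : c = p
    · subst hcp
      have hxu : w = u := parent_unique C.inp harc C.hup
      rcases Relation.ReflTransGen.cases_head hrest with heq | ⟨z, hz, hzv⟩
      · exact absurd heq.symm hvp
      · rcases child_eq C.out2 C.hpa C.hpb C.hab hz with hz1 | hz1
        · rw [hz1] at hzv
          have hva' : v = a := reach_leaf C.hla hzv
          rw [hva', hxu]
          exact Relation.ReflTransGen.single (C.mem_A.mpr (Or.inl rfl))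
        · rw [hz1] at hzv
          exact absurd (reach_leaf C.hlb hzv) hvb
    · by_cases hcb : c = b
      · subst hcb
        exact absurd (parent_unique C.inb harc C.hpb) hxp
      · have harc' : (w, c) ∈ P.A := by
          refine C.mem_A.mpr (Or.inr ⟨harc, ?_, ?_, ?_⟩)
          · rintro heq; exact hcp (congrArg Prod.snd heq)
          · rintro heq; exact hxp (congrArg Prod.fst heq)
          · rintro heq; exact hxp (congrArg Prod.fst heq)
        exact Relation.ReflTransGen.head harc' (ih hcp hcb)

lemma isPhylo : P.IsPhylo (X.erase b) := by
  have hpX : p ∉ X := fun h => by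
    have := (C.hph.leafSet p C.pV).mpr h
    rw [C.out2] at this; omega
  constructor
  · exact C.acyclic
  · intro x hx
    rw [Finset.mem_erase] at hx
    exact C.mem_V'.mpr ⟨C.hph.X_sub hx.2, hx.1, fun h => hpX (h ▸ hx.2)⟩
  · intro v hv
    obtain ⟨hvV, hvb, hvp⟩ := C.mem_V'.mp hv
    rw [C.outDeg_eq hvb hvp, Finset.mem_erase]
    rw [C.hph.leafSet v hvV]
    tauto
  · obtain ⟨ρ, hρV, hρ0, hρ2, hρr⟩ := C.hph.root
    have hρb : ρ ≠ b := fun h => by rw [h] at hρ2; rw [C.hlb] at hρ2; omega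
    have hρp : ρ ≠ p := fun h => by rw [h] at hρ0; rw [C.inp] at hρ0; omega
    refine ⟨ρ, C.mem_V'.mpr ⟨hρV, hρb, hρp⟩, ?_, ?_, ?_⟩
    · rw [C.inDeg_eq hρb hρp]; exact hρ0
    · rw [C.outDeg_eq hρb hρp]; exact hρ2
    · intro v hv
      obtain ⟨hvV, hvb, hvp⟩ := C.mem_V'.mp hv
      exact C.reach_P hvp hvb (hρr v hvV) hρp hρb
  · intro v hv
    obtain ⟨hvV, hvb, hvp⟩ := C.mem_V'.mp hv
    rw [C.inDeg_eq hvb hvp, C.outDeg_eq hvb hvp]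
    exact C.hph.degrees v hvV

end RedCtx
end Digraph'

namespace Digraph'

/-- Context for cutting a reticulated cherry. -/
structure CutCtx (N P : Digraph') (X : Finset ℕ) (a b pa pb ua q : ℕ) : Prop where
  hph : N.IsPhylo X
  hab : a ≠ b
  hla : N.outDeg a = 0
  hlb : N.outDeg b = 0
  hpaa : (pa, a) ∈ N.A
  hpbb : (pb, b) ∈ N.A
  hin2 : N.inDeg pb = 2
  hpapb : (pa, pb) ∈ N.A
  hua : (ua, pa) ∈ N.A
  hq : (q, pb) ∈ N.A
  hqpa : q ≠ pa
  hPV : P.V = (N.V.erase pa).erase pb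
  hPA : P.A = insert (ua, a) (insert (q, b)
      (((((N.A.erase (pa, pb)).erase (ua, pa)).erase (pa, a)).erase (q, pb)).erase (pb, b)))

namespace CutCtx

variable {N P : Digraph'} {X : Finset ℕ} {a b pa pb ua q : ℕ}
  (C : CutCtx N P X a b pa pb ua q)
include C

lemma aV : a ∈ N.V := (N.mem_V _ C.hpaa).2
lemma bV : b ∈ N.V := (N.mem_V _ C.hpbb).2
lemma paV : pa ∈ N.V := (N.mem_V _ C.hpaa).1
lemma pbV : pb ∈ N.V := (N.mem_V _ C.hpbb).1
lemma uaV : ua ∈ N.V := (N.mem_V _ C.hua).1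
lemma qV : q ∈ N.V := (N.mem_V _ C.hq).1
lemma ina : N.inDeg a = 1 := C.hph.leaf_inDeg C.aV C.hla
lemma inb : N.inDeg b = 1 := C.hph.leaf_inDeg C.bV C.hlb
lemma apb_ne : a ≠ pb := fun h => by
  have := C.ina; rw [h] at this; have := C.hin2; omega
lemma bpb_ne : b ≠ pb := fun h => by
  have := C.inb; rw [h] at this; have := C.hin2; omega
lemma out2pa : N.outDeg pa = 2 := (C.hph.outDeg_two C.hpaa C.hpapb C.apb_ne).1
lemma inpa : N.inDeg pa = 1 := by
  have h2 := (C.hph.outDeg_two C.hpaa C.hpapb C.apb_ne).2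
  have h1 := inDeg_pos C.hua
  omega
lemma outpb : N.outDeg pb = 1 := by
  rcases C.hph.degrees pb C.pbV with ⟨h1, h2⟩ | ⟨h1, h2⟩ | ⟨h1, h2⟩ | ⟨h1, h2⟩ <;>
    [skip; skip; skip; exact h2] <;> (exfalso; have := C.hin2; omega)
lemma uapa_ne : ua ≠ pa := arc_ne_s11 C.hph.acyclic C.hua
lemma qpb_ne : q ≠ pb := arc_ne_s11 C.hph.acyclic C.hq
lemma papb_ne : pa ≠ pb := arc_ne_s11 C.hph.acyclic C.hpapb
lemma paa_ne : pa ≠ a := fun h => outDeg_pos C.hpaa (by rw [h]; exact C.hla)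
lemma pab_ne : pa ≠ b := fun h => outDeg_pos C.hpaa (by rw [h]; exact C.hlb)
lemma pba_ne : pb ≠ a := fun h => outDeg_pos C.hpbb (by rw [h]; exact C.hla)
lemma pbb_ne : pb ≠ b := fun h => outDeg_pos C.hpbb (by rw [h]; exact C.hlb)
lemma uaa_ne : ua ≠ a := fun h => outDeg_pos C.hua (by rw [h]; exact C.hla)
lemma uab_ne : ua ≠ b := fun h => outDeg_pos C.hua (by rw [h]; exact C.hlb)
lemma qa_ne : q ≠ a := fun h => outDeg_pos C.hq (by rw [h]; exact C.hla)
lemma qb_ne : q ≠ b := fun h => outDeg_pos C.hq (by rw [h]; exact C.hlb)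
lemma uapb_ne : ua ≠ pb := fun h => by
  have : pa = b := child_unique C.outpb (by rw [← h]; exact C.hua) C.hpbb
  exact C.pab_ne this
lemma uaaA : (ua, a) ∉ N.A := fun h => C.uapa_ne (parent_unique C.ina h C.hpaa)
lemma qbA : (q, b) ∉ N.A := fun h => C.qpb_ne (parent_unique C.inb h C.hpbb)

lemma mem_A {e : ℕ × ℕ} :
    e ∈ P.A ↔ e = (ua, a) ∨ e = (q, b) ∨ (e ∈ N.A ∧ e ≠ (pa, pb) ∧ e ≠ (ua, pa) ∧
      e ≠ (pa, a) ∧ e ≠ (q, pb) ∧ e ≠ (pb, b)) := by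
  rw [C.hPA]
  simp only [Finset.mem_insert, Finset.mem_erase]
  tauto

lemma mem_V' {v : ℕ} : v ∈ P.V ↔ v ∈ N.V ∧ v ≠ pa ∧ v ≠ pb := by
  rw [C.hPV]
  simp only [Finset.mem_erase]
  tauto

lemma inDeg_eq {v : ℕ} (hvpa : v ≠ pa) (hvpb : v ≠ pb) : P.inDeg v = N.inDeg v := by
  by_cases hva : v = a
  · subst hva
    have hfil : P.A.filter (fun e => e.2 = v) = {(ua, v)} := by
      ext e
      simp only [Finset.mem_filter, Finset.mem_singleton, C.mem_A]
      constructor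
      · rintro ⟨h1 | h1 | ⟨hA, h2, h3, h4, h5, h6⟩, h7⟩
        · exact h1
        · rw [h1] at h7; exact absurd h7 C.hab.symm
        · exfalso
          have he : e = (e.1, v) := Prod.ext rfl h7
          have : e.1 = pa := parent_unique C.ina (he ▸ hA) C.hpaa
          exact h4 (by rw [he, this])
      · rintro rfl
        exact ⟨Or.inl rfl, rfl⟩
    rw [inDeg, hfil, Finset.card_singleton, C.ina]
  · by_cases hvb : v = b
    · subst hvb
      have hfil : P.A.filter (fun e => e.2 = v) = {(q, v)} := by
        ext e
        simp only [Finset.mem_filter, Finset.mem_singleton, C.mem_A]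
        constructor
        · rintro ⟨h1 | h1 | ⟨hA, h2, h3, h4, h5, h6⟩, h7⟩
          · rw [h1] at h7; exact absurd h7 C.hab
          · exact h1
          · exfalso
            have he : e = (e.1, v) := Prod.ext rfl h7
            have : e.1 = pb := parent_unique C.inb (he ▸ hA) C.hpbb
            exact h6 (by rw [he, this])
        · rintro rfl
          exact ⟨Or.inr (Or.inl rfl), rfl⟩
      rw [inDeg, hfil, Finset.card_singleton, C.inb]
    · have hfil : P.A.filter (fun e => e.2 = v) = N.A.filter (fun e => e.2 = v) := by
        ext e
        simp only [Finset.mem_filter, C.mem_A]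
        constructor
        · rintro ⟨h1 | h1 | ⟨hA, h2, h3, h4, h5, h6⟩, h7⟩
          · rw [h1] at h7; exact absurd h7.symm hva
          · rw [h1] at h7; exact absurd h7.symm hvb
          · exact ⟨hA, h7⟩
        · rintro ⟨hA, h7⟩
          refine ⟨Or.inr (Or.inr ⟨hA, ?_, ?_, ?_, ?_, ?_⟩), h7⟩
          · rintro rfl; exact hvpb h7.symm
          · rintro rfl; exact hvpa h7.symm
          · rintro rfl; exact hva h7.symm
          · rintro rfl; exact hvpb h7.symm
          · rintro rfl; exact hvb h7.symm
      rw [inDeg, inDeg, hfil]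

lemma outDeg_eq {v : ℕ} (hvpa : v ≠ pa) (hvpb : v ≠ pb) : P.outDeg v = N.outDeg v := by
  by_cases hvu : v = ua <;> by_cases hvq : v = q
  · -- v = ua = q
    subst hvu; subst hvq
    have hfil : P.A.filter (fun e => e.1 = v) =
        insert (v, a) (insert (v, b)
          (((N.A.filter (fun e => e.1 = v)).erase (v, pa)).erase (v, pb))) := by
      ext e
      simp only [Finset.mem_filter, Finset.mem_insert, Finset.mem_erase, C.mem_A]
      constructor
      · rintro ⟨h1 | h1 | ⟨hA, h2, h3, h4, h5, h6⟩, h7⟩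
        · exact Or.inl h1
        · exact Or.inr (Or.inl h1)
        · exact Or.inr (Or.inr ⟨h5, h3, hA, h7⟩)
      · rintro (rfl | rfl | ⟨h5, h3, hA, h7⟩)
        · exact ⟨Or.inl rfl, rfl⟩
        · exact ⟨Or.inr (Or.inl rfl), rfl⟩
        · refine ⟨Or.inr (Or.inr ⟨hA, ?_, h3, ?_, h5, ?_⟩), h7⟩
          · rintro rfl; exact hvpa h7.symm
          · rintro rfl; exact hvpa h7.symm
          · rintro rfl; exact hvpb h7.symm
    rw [outDeg, outDeg, hfil]
    exact card_exchange2 (by simp [C.hua]) (by simp [C.hq])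
      (by simp [C.papb_ne]) (by simp [C.uaaA]) (by simp [C.qbA])
      (by simp [C.hab])
  · -- v = ua ≠ q
    subst hvu
    have hfil : P.A.filter (fun e => e.1 = v) =
        insert (v, a) ((N.A.filter (fun e => e.1 = v)).erase (v, pa)) := by
      ext e
      simp only [Finset.mem_filter, Finset.mem_insert, Finset.mem_erase, C.mem_A]
      constructor
      · rintro ⟨h1 | h1 | ⟨hA, h2, h3, h4, h5, h6⟩, h7⟩
        · exact Or.inl h1
        · rw [h1] at h7; exact absurd h7.symm hvq
        · exact Or.inr ⟨h3, hA, h7⟩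
      · rintro (rfl | ⟨h3, hA, h7⟩)
        · exact ⟨Or.inl rfl, rfl⟩
        · refine ⟨Or.inr (Or.inr ⟨hA, ?_, h3, ?_, ?_, ?_⟩), h7⟩
          · rintro rfl; exact hvpa h7.symm
          · rintro rfl; exact hvpa h7.symm
          · rintro rfl; exact hvq h7.symm
          · rintro rfl; exact hvpb h7.symm
    rw [outDeg, outDeg, hfil]
    exact card_exchange (by simp [C.hua]) (by simp [C.uaaA])
  · -- v = q ≠ ua
    subst hvq
    have hfil : P.A.filter (fun e => e.1 = v) =
        insert (v, b) ((N.A.filter (fun e => e.1 = v)).erase (v, pb)) := by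
      ext e
      simp only [Finset.mem_filter, Finset.mem_insert, Finset.mem_erase, C.mem_A]
      constructor
      · rintro ⟨h1 | h1 | ⟨hA, h2, h3, h4, h5, h6⟩, h7⟩
        · rw [h1] at h7; exact absurd h7.symm hvu
        · exact Or.inl h1
        · exact Or.inr ⟨h5, hA, h7⟩
      · rintro (rfl | ⟨h5, hA, h7⟩)
        · exact ⟨Or.inr (Or.inl rfl), rfl⟩
        · refine ⟨Or.inr (Or.inr ⟨hA, ?_, ?_, ?_, h5, ?_⟩), h7⟩
          · rintro rfl; exact hvpa h7.symm
          · rintro rfl; exact hvu h7.symm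
          · rintro rfl; exact hvpa h7.symm
          · rintro rfl; exact hvpb h7.symm
    rw [outDeg, outDeg, hfil]
    exact card_exchange (by simp [C.hq]) (by simp [C.qbA])
  · -- v ∉ {ua, q}
    have hfil : P.A.filter (fun e => e.1 = v) = N.A.filter (fun e => e.1 = v) := by
      ext e
      simp only [Finset.mem_filter, C.mem_A]
      constructor
      · rintro ⟨h1 | h1 | ⟨hA, h2, h3, h4, h5, h6⟩, h7⟩
        · rw [h1] at h7; exact absurd h7.symm hvu
        · rw [h1] at h7; exact absurd h7.symm hvq
        · exact ⟨hA, h7⟩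
      · rintro ⟨hA, h7⟩
        refine ⟨Or.inr (Or.inr ⟨hA, ?_, ?_, ?_, ?_, ?_⟩), h7⟩
        · rintro rfl; exact hvpa h7.symm
        · rintro rfl; exact hvu h7.symm
        · rintro rfl; exact hvpa h7.symm
        · rintro rfl; exact hvq h7.symm
        · rintro rfl; exact hvpb h7.symm
    rw [outDeg, outDeg, hfil]

lemma reach_sub {x y : ℕ} (h : P.Reach x y) : N.Reach x y := by
  induction h with
  | refl => exact Relation.ReflTransGen.refl
  | tail _ harc ih =>
    rcases C.mem_A.mp harc with heq | heq | ⟨hA, _, _, _, _, _⟩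
    · obtain ⟨rfl, rfl⟩ := Prod.mk.injEq _ _ _ _ ▸ heq
      exact (ih.tail C.hua).tail C.hpaa
    · obtain ⟨rfl, rfl⟩ := Prod.mk.injEq _ _ _ _ ▸ heq
      exact (ih.tail C.hq).tail C.hpbb
    · exact ih.tail hA

lemma outa : P.outDeg a = 0 := by
  rw [C.outDeg_eq (fun h => C.paa_ne h.symm) (fun h => C.pba_ne h.symm)]
  exact C.hla

lemma outb : P.outDeg b = 0 := by
  rw [C.outDeg_eq (fun h => C.pab_ne h.symm) (fun h => C.pbb_ne h.symm)]
  exact C.hlb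

lemma acyclic : P.Acyclic := by
  intro x y harc hr
  rcases C.mem_A.mp harc with heq | heq | ⟨hA, _, _, _, _, _⟩
  · have h1 : x = ua := congrArg Prod.fst heq
    have h2 : y = a := congrArg Prod.snd heq
    rw [h2] at hr
    have := reach_leaf C.outa hr
    rw [this] at h1
    exact C.uaa_ne h1.symm
  · have h1 : x = q := congrArg Prod.fst heq
    have h2 : y = b := congrArg Prod.snd heq
    rw [h2] at hr
    have := reach_leaf C.outb hr
    rw [this] at h1
    exact C.qb_ne h1.symm
  · exact C.hph.acyclic x y hA (C.reach_sub hr)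

lemma no_reach_pa {v : ℕ} (hva : v ≠ a) (hvb : v ≠ b) (hvpa : v ≠ pa)
    (hvpb : v ≠ pb) (h : N.Reach pa v) : False := by
  rcases Relation.ReflTransGen.cases_head h with heq | ⟨z, hz, hzv⟩
  · exact hvpa heq.symm
  · rcases child_eq C.out2pa C.hpaa C.hpapb C.apb_ne hz with hz1 | hz1
    · rw [hz1] at hzv; exact hva (reach_leaf C.hla hzv)
    · rw [hz1] at hzv
      rcases Relation.ReflTransGen.cases_head hzv with heq | ⟨w, hw, hwv⟩
      · exact hvpb heq.symm
      · have : w = b := child_unique C.outpb hw C.hpbb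
        rw [this] at hwv
        exact hvb (reach_leaf C.hlb hwv)

lemma reach_P {v : ℕ} (hvpa : v ≠ pa) (hvpb : v ≠ pb) (hva : v ≠ a) (hvb : v ≠ b) :
    ∀ {x : ℕ}, N.Reach x v → x ≠ pa → x ≠ pb → P.Reach x v := by
  intro x hr
  induction hr using Relation.ReflTransGen.head_induction_on with
  | refl => intro _ _; exact Relation.ReflTransGen.refl
  | @head w c harc hrest ih =>
    intro hxpa hxpb
    by_cases hcpa : c = pa
    · rw [hcpa] at hrest
      exact absurd (C.no_reach_pa hva hvb hvpa hvpb hrest) not_false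
    · by_cases hcpb : c = pb
      · rw [hcpb] at hrest
        rcases Relation.ReflTransGen.cases_head hrest with heq | ⟨z, hz, hzv⟩
        · exact absurd heq.symm hvpb
        · have : z = b := child_unique C.outpb hz C.hpbb
          rw [this] at hzv
          exact absurd (reach_leaf C.hlb hzv) hvb
      · by_cases hca : c = a
        · rw [hca] at hrest harc
          exact absurd (parent_unique C.ina harc C.hpaa) hxpa
        · by_cases hcb : c = b
          · rw [hcb] at hrest harc
            exact absurd (parent_unique C.inb harc C.hpbb) hxpb
          · have harc' : (w, c) ∈ P.A := by
              refine C.mem_A.mpr (Or.inr (Or.inr ⟨harc, ?_, ?_, ?_, ?_, ?_⟩))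
              · rintro heq; exact hcpb (congrArg Prod.snd heq)
              · rintro heq; exact hcpa (congrArg Prod.snd heq)
              · rintro heq; exact hca (congrArg Prod.snd heq)
              · rintro heq; exact hcpb (congrArg Prod.snd heq)
              · rintro heq; exact hcb (congrArg Prod.snd heq)
            exact Relation.ReflTransGen.head harc' (ih hcpa hcpb)

lemma isPhylo : P.IsPhylo X := by
  have hpaX : pa ∉ X := fun h => by
    have := (C.hph.leafSet pa C.paV).mpr h
    rw [C.out2pa] at this; omega
  have hpbX : pb ∉ X := fun h => by
    have := (C.hph.leafSet pb C.pbV).mpr h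
    rw [C.outpb] at this; omega
  constructor
  · exact C.acyclic
  · intro x hx
    exact C.mem_V'.mpr ⟨C.hph.X_sub hx, fun h => hpaX (h ▸ hx), fun h => hpbX (h ▸ hx)⟩
  · intro v hv
    obtain ⟨hvV, hvpa, hvpb⟩ := C.mem_V'.mp hv
    rw [C.outDeg_eq hvpa hvpb]
    exact C.hph.leafSet v hvV
  · obtain ⟨ρ, hρV, hρ0, hρ2, hρr⟩ := C.hph.root
    have hρpa : ρ ≠ pa := fun h => by rw [h, C.inpa] at hρ0; omega
    have hρpb : ρ ≠ pb := fun h => by rw [h, C.hin2] at hρ0; omega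
    refine ⟨ρ, C.mem_V'.mpr ⟨hρV, hρpa, hρpb⟩, ?_, ?_, ?_⟩
    · rw [C.inDeg_eq hρpa hρpb]; exact hρ0
    · rw [C.outDeg_eq hρpa hρpb]; exact hρ2
    · intro v hv
      obtain ⟨hvV, hvpa, hvpb⟩ := C.mem_V'.mp hv
      by_cases hva : v = a
      · subst hva
        have hr : P.Reach ρ ua := C.reach_P C.uapa_ne C.uapb_ne C.uaa_ne C.uab_ne
          (hρr ua C.uaV) hρpa hρpb
        exact hr.tail (C.mem_A.mpr (Or.inl rfl))
      · by_cases hvb : v = b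
        · subst hvb
          have hr : P.Reach ρ q := C.reach_P C.hqpa C.qpb_ne C.qa_ne C.qb_ne
            (hρr q C.qV) hρpa hρpb
          exact hr.tail (C.mem_A.mpr (Or.inr (Or.inl rfl)))
        · exact C.reach_P hvpa hvpb hva hvb (hρr v hvV) hρpa hρpb
  · intro v hv
    obtain ⟨hvV, hvpa, hvpb⟩ := C.mem_V'.mp hv
    rw [C.inDeg_eq hvpa hvpb, C.outDeg_eq hvpa hvpb]
    exact C.hph.degrees v hvV

end CutCtx
end Digraph'

namespace Digraph'

/-- Relabel a digraph along a permutation of `ℕ`. -/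
def mapN (f : ℕ ≃ ℕ) (N : Digraph') : Digraph' where
  V := N.V.image f
  A := N.A.image (fun e => (f e.1, f e.2))
  mem_V := by
    intro e he
    simp only [Finset.mem_image] at he ⊢
    obtain ⟨⟨x, y⟩, hxy, rfl⟩ := he
    exact ⟨⟨x, (N.mem_V _ hxy).1, rfl⟩, ⟨y, (N.mem_V _ hxy).2, rfl⟩⟩

lemma mapN_V (f : ℕ ≃ ℕ) (N : Digraph') : (mapN f N).V = N.V.image f := rfl

lemma mapN_A (f : ℕ ≃ ℕ) (N : Digraph') :
    (mapN f N).A = N.A.image (fun e => (f e.1, f e.2)) := rfl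

lemma mapN_mem_V {f : ℕ ≃ ℕ} {N : Digraph'} {v : ℕ} :
    f v ∈ (mapN f N).V ↔ v ∈ N.V := by
  simp only [mapN, Finset.mem_image]
  constructor
  · rintro ⟨x, hx, hxy⟩
    rwa [← f.injective hxy]
  · exact fun h => ⟨v, h, rfl⟩

lemma mapN_mem_A {f : ℕ ≃ ℕ} {N : Digraph'} {x y : ℕ} :
    (f x, f y) ∈ (mapN f N).A ↔ (x, y) ∈ N.A := by
  simp only [mapN, Finset.mem_image]
  constructor
  · rintro ⟨⟨x', y'⟩, hx, hxy⟩
    simp only [Prod.mk.injEq] at hxy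
    rwa [← f.injective hxy.1, ← f.injective hxy.2]
  · exact fun h => ⟨(x, y), h, rfl⟩

lemma mapN_filter_in {f : ℕ ≃ ℕ} {N : Digraph'} (v : ℕ) :
    (mapN f N).A.filter (fun e => e.2 = f v) =
      (N.A.filter (fun e => e.2 = v)).image (fun e => (f e.1, f e.2)) := by
  ext ⟨x, y⟩
  simp only [mapN, Finset.mem_filter, Finset.mem_image, Prod.mk.injEq]
  constructor
  · rintro ⟨⟨⟨x', y'⟩, hm, hx, hy⟩, hv⟩
    refine ⟨(x', y'), ⟨hm, ?_⟩, hx, hy⟩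
    exact f.injective (by rw [hy]; exact hv)
  · rintro ⟨⟨x', y'⟩, ⟨hm, hv⟩, hx, hy⟩
    exact ⟨⟨(x', y'), hm, hx, hy⟩, by rw [← hy, hv]⟩

lemma mapN_filter_out {f : ℕ ≃ ℕ} {N : Digraph'} (v : ℕ) :
    (mapN f N).A.filter (fun e => e.1 = f v) =
      (N.A.filter (fun e => e.1 = v)).image (fun e => (f e.1, f e.2)) := by
  ext ⟨x, y⟩
  simp only [mapN, Finset.mem_filter, Finset.mem_image, Prod.mk.injEq]
  constructor
  · rintro ⟨⟨⟨x', y'⟩, hm, hx, hy⟩, hv⟩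
    refine ⟨(x', y'), ⟨hm, ?_⟩, hx, hy⟩
    exact f.injective (by rw [hx]; exact hv)
  · rintro ⟨⟨x', y'⟩, ⟨hm, hv⟩, hx, hy⟩
    exact ⟨⟨(x', y'), hm, hx, hy⟩, by rw [← hx, hv]⟩

lemma pairmap_inj (f : ℕ ≃ ℕ) :
    Function.Injective (fun e : ℕ × ℕ => (f e.1, f e.2)) := by
  rintro ⟨x, y⟩ ⟨x', y'⟩ h
  simp only [Prod.mk.injEq] at h ⊢
  exact ⟨f.injective h.1, f.injective h.2⟩

lemma mapN_inDeg {f : ℕ ≃ ℕ} {N : Digraph'} (v : ℕ) :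
    (mapN f N).inDeg (f v) = N.inDeg v := by
  rw [inDeg, inDeg, mapN_filter_in, Finset.card_image_of_injective _ (pairmap_inj f)]

lemma mapN_outDeg {f : ℕ ≃ ℕ} {N : Digraph'} (v : ℕ) :
    (mapN f N).outDeg (f v) = N.outDeg v := by
  rw [outDeg, outDeg, mapN_filter_out, Finset.card_image_of_injective _ (pairmap_inj f)]

lemma mapN_single {f : ℕ ≃ ℕ} {N : Digraph'} (h : IsSingle N) :
    IsSingle (mapN f N) := by
  obtain ⟨x, hV, hA⟩ := h
  exact ⟨f x, by simp [mapN, hV], by simp [mapN, hA]⟩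

lemma mapN_reduce {f : ℕ ≃ ℕ} {N N' : Digraph'} {a b : ℕ}
    (h : ReduceCherry N N' a b) :
    ReduceCherry (mapN f N) (mapN f N') (f a) (f b) := by
  obtain ⟨⟨hab, ⟨haV, hla⟩, ⟨hbV, hlb⟩, _⟩, p, hpa, hpb, hcase⟩ := h
  refine ⟨⟨fun h => hab (f.injective h), ⟨mapN_mem_V.mpr haV, by rw [mapN_outDeg]; exact hla⟩,
    ⟨mapN_mem_V.mpr hbV, by rw [mapN_outDeg]; exact hlb⟩,
    f p, mapN_mem_A.mpr hpa, mapN_mem_A.mpr hpb⟩,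
    f p, mapN_mem_A.mpr hpa, mapN_mem_A.mpr hpb, ?_⟩
  rcases hcase with ⟨h0, hV, hA⟩ | ⟨u, hup, hV, hA⟩
  · exact Or.inl ⟨by rw [mapN_inDeg]; exact h0, by simp [mapN, hV], by simp [mapN, hA]⟩
  · refine Or.inr ⟨f u, mapN_mem_A.mpr hup, ?_, ?_⟩
    · rw [mapN_V, mapN_V, hV, Finset.image_erase f.injective,
        Finset.image_erase f.injective]
    · rw [mapN_A, mapN_A, hA, Finset.image_insert, Finset.image_erase (pairmap_inj f),
        Finset.image_erase (pairmap_inj f), Finset.image_erase (pairmap_inj f)]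

lemma mapN_cut {f : ℕ ≃ ℕ} {N N' : Digraph'} {a b : ℕ}
    (h : CutRetCherry N N' a b) :
    CutRetCherry (mapN f N) (mapN f N') (f a) (f b) := by
  obtain ⟨⟨hab, ⟨haV, hla⟩, ⟨hbV, hlb⟩, _⟩, pa, pb, ua, q, hpaa, hpbb, hin2, hpapb,
    hua, hq, hqpa, hV, hA⟩ := h
  refine ⟨⟨fun h => hab (f.injective h), ⟨mapN_mem_V.mpr haV, by rw [mapN_outDeg]; exact hla⟩,
    ⟨mapN_mem_V.mpr hbV, by rw [mapN_outDeg]; exact hlb⟩,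
    f pa, f pb, mapN_mem_A.mpr hpaa, mapN_mem_A.mpr hpbb,
    by rw [mapN_inDeg]; exact hin2, mapN_mem_A.mpr hpapb⟩,
    f pa, f pb, f ua, f q, mapN_mem_A.mpr hpaa, mapN_mem_A.mpr hpbb,
    by rw [mapN_inDeg]; exact hin2, mapN_mem_A.mpr hpapb,
    mapN_mem_A.mpr hua, mapN_mem_A.mpr hq, fun h => hqpa (f.injective h), ?_, ?_⟩
  · rw [mapN_V, mapN_V, hV, Finset.image_erase f.injective, Finset.image_erase f.injective]
  · rw [mapN_A, mapN_A, hA, Finset.image_insert, Finset.image_insert,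
      Finset.image_erase (pairmap_inj f), Finset.image_erase (pairmap_inj f),
      Finset.image_erase (pairmap_inj f), Finset.image_erase (pairmap_inj f),
      Finset.image_erase (pairmap_inj f)]

lemma mapN_step {f : ℕ ≃ ℕ} {N N' : Digraph'} (h : CherryStep N N') :
    CherryStep (mapN f N) (mapN f N') := by
  obtain ⟨a, b, h | h⟩ := h
  · exact ⟨f a, f b, Or.inl (mapN_reduce h)⟩
  · exact ⟨f a, f b, Or.inr (mapN_cut h)⟩

lemma mapN_orchard {f : ℕ ≃ ℕ} {N : Digraph'} (h : IsOrchard N) :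
    IsOrchard (mapN f N) := by
  obtain ⟨M, hseq, hM⟩ := h
  exact ⟨mapN f M, Relation.ReflTransGen.lift (mapN f) (fun _ _ h => mapN_step h) _ _ hseq,
    mapN_single hM⟩

lemma mapN_mapN_self {f : ℕ ≃ ℕ} {N : Digraph'} : mapN f (mapN f.symm N) = N := by
  refine deq ?_ ?_
  · rw [mapN_V, mapN_V, Finset.image_image]
    have : (f : ℕ → ℕ) ∘ (f.symm : ℕ → ℕ) = id := by
      funext x; simp
    rw [this, Finset.image_id]
  · rw [mapN_A, mapN_A, Finset.image_image]
    have : ((fun e : ℕ × ℕ => (f e.1, f e.2)) ∘ (fun e : ℕ × ℕ => (f.symm e.1, f.symm e.2)))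
        = id := by
      funext e; simp
    rw [this, Finset.image_id]

end Digraph'

namespace Digraph'

def NetOK (N : Digraph') : Prop := (∃ X, N.IsPhylo X) ∨ IsSingle N

lemma step_classify {N P : Digraph'} {X : Finset ℕ} (hph : N.IsPhylo X)
    (h : CherryStep N P) :
    (∃ a b p, (p, a) ∈ N.A ∧ (p, b) ∈ N.A ∧ a ≠ b ∧ N.outDeg a = 0 ∧
      N.outDeg b = 0 ∧ N.inDeg p = 0 ∧ P.V = {a} ∧ P.A = ∅) ∨
    (∃ a b u p, RedCtx N P X a b u p) ∨
    (∃ a b pa pb ua q, CutCtx N P X a b pa pb ua q) := by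
  obtain ⟨a, b, h | h⟩ := h
  · obtain ⟨⟨hab, ⟨haV, hla⟩, ⟨hbV, hlb⟩, _⟩, p, hpa, hpb, hcase⟩ := h
    rcases hcase with ⟨h0, hV, hA⟩ | ⟨u, hup, hV, hA⟩
    · exact Or.inl ⟨a, b, p, hpa, hpb, hab, hla, hlb, h0, hV, hA⟩
    · exact Or.inr (Or.inl ⟨a, b, u, p, ⟨hph, hab, hla, hlb, hpa, hpb, hup, hV, hA⟩⟩)
  · obtain ⟨⟨hab, ⟨haV, hla⟩, ⟨hbV, hlb⟩, _⟩, pa, pb, ua, q, hpaa, hpbb, hin2,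
      hpapb, hua, hq, hqpa, hV, hA⟩ := h
    exact Or.inr (Or.inr ⟨a, b, pa, pb, ua, q,
      ⟨hph, hab, hla, hlb, hpaa, hpbb, hin2, hpapb, hua, hq, hqpa, hV, hA⟩⟩)

lemma step_netOK {N P : Digraph'} (hok : NetOK N) (h : CherryStep N P) : NetOK P := by
  rcases hok with ⟨X, hph⟩ | hs
  · rcases step_classify hph h with ⟨a, b, p, _, _, _, _, _, _, hV, hA⟩ |
      ⟨a, b, u, p, C⟩ | ⟨a, b, pa, pb, ua, q, C⟩
    · exact Or.inr ⟨a, hV, hA⟩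
    · exact Or.inl ⟨X.erase b, C.isPhylo⟩
    · exact Or.inl ⟨X, C.isPhylo⟩
  · exact absurd h (no_step_of_single hs)

lemma RedCtx.det {N P Q : Digraph'} {X : Finset ℕ} {a b u p u' p' : ℕ}
    (C1 : RedCtx N P X a b u p) (C2 : RedCtx N Q X a b u' p') : P = Q := by
  have hp : p' = p := parent_unique C1.ina C2.hpa C1.hpa
  subst hp
  have hu : u' = u := parent_unique C1.inp C2.hup C1.hup
  subst hu
  exact deq (C1.hPV.trans C2.hPV.symm) (C1.hPA.trans C2.hPA.symm)

lemma CutCtx.det {N P Q : Digraph'} {X : Finset ℕ} {a b pa pb ua q pa' pb' ua' q' : ℕ}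
    (C1 : CutCtx N P X a b pa pb ua q) (C2 : CutCtx N Q X a b pa' pb' ua' q') :
    P = Q := by
  have h1 : pa' = pa := parent_unique C1.ina C2.hpaa C1.hpaa
  subst h1
  have h2 : pb' = pb := parent_unique C1.inb C2.hpbb C1.hpbb
  subst h2
  have h3 : ua' = ua := parent_unique C1.inpa C2.hua C1.hua
  subst h3
  have h4 : q' = q := second_parent C1.hin2 C1.hpapb C1.hq (Ne.symm C1.hqpa) C2.hq C2.hqpa
  subst h4
  exact deq (C1.hPV.trans C2.hPV.symm) (C1.hPA.trans C2.hPA.symm)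

/-- Build a digraph from vertex and arc sets, discarding stray arcs. -/
def mkD (V : Finset ℕ) (A : Finset (ℕ × ℕ)) : Digraph' :=
  ⟨V, A.filter (fun e => e.1 ∈ V ∧ e.2 ∈ V), fun e he => (Finset.mem_filter.mp he).2⟩

lemma mkD_V (V : Finset ℕ) (A : Finset (ℕ × ℕ)) : (mkD V A).V = V := rfl

lemma mkD_A {V : Finset ℕ} {A : Finset (ℕ × ℕ)}
    (h : ∀ e ∈ A, e.1 ∈ V ∧ e.2 ∈ V) : (mkD V A).A = A :=
  Finset.filter_true_of_mem h

lemma mem_image_invol {α : Type*} [DecidableEq α] {F : α → α} (hF : ∀ x, F (F x) = x)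
    {s : Finset α} {x : α} : x ∈ s.image F ↔ F x ∈ s := by
  simp only [Finset.mem_image]
  constructor
  · rintro ⟨y, hy, rfl⟩
    rwa [hF]
  · intro h
    exact ⟨F x, h, hF x⟩

end Digraph'

namespace Digraph'

lemma diamond_swap {N P Q : Digraph'} {X : Finset ℕ} {a b u p : ℕ}
    (C1 : RedCtx N P X a b u p) (C2 : RedCtx N Q X b a u p) :
    Q = mapN (Equiv.swap a b) P := by
  set s := Equiv.swap a b with hs
  have hss : ∀ x, s (s x) = x := fun x => Equiv.swap_apply_self a b x
  have hsa : s a = b := Equiv.swap_apply_left a b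
  have hsb : s b = a := Equiv.swap_apply_right a b
  have hsu : s u = u := Equiv.swap_apply_of_ne_of_ne C1.ua_ne C1.ub_ne
  have hsp : s p = p := Equiv.swap_apply_of_ne_of_ne C1.pa_ne C1.pb_ne
  have hFF : ∀ e : ℕ × ℕ, (fun e : ℕ × ℕ => (s e.1, s e.2))
      ((fun e : ℕ × ℕ => (s e.1, s e.2)) e) = e := by
    intro e; simp only [hss]
  refine (deq ?_ ?_).symm
  · rw [mapN_V, C1.hPV, C2.hPV]
    ext x
    rw [mem_image_invol hss]
    simp only [Finset.mem_erase]
    constructor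
    · rintro ⟨h1, h2, h3⟩
      by_cases hxa : x = a
      · rw [hxa, hsa] at h2; exact absurd rfl h2
      · by_cases hxb : x = b
        · subst hxb
          exact ⟨fun h => C1.pb_ne h.symm, Ne.symm C1.hab, C1.bV⟩
        · rw [Equiv.swap_apply_of_ne_of_ne hxa hxb] at h1 h2 h3
          exact ⟨h1, hxa, h3⟩
    · rintro ⟨h1, h2, h3⟩
      by_cases hxb : x = b
      · subst hxb
        rw [hsb]
        exact ⟨fun h => C1.pa_ne h.symm, C1.hab, C1.aV⟩
      · rw [Equiv.swap_apply_of_ne_of_ne h2 hxb]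
        exact ⟨h1, hxb, h3⟩
  · rw [mapN_A]
    ext e
    rw [mem_image_invol hFF, C1.mem_A, C2.mem_A]
    obtain ⟨x, y⟩ := e
    simp only
    have fixer : ∀ z w : ℕ, (z, w) ∈ N.A → (z, w) ≠ (p, a) → (z, w) ≠ (p, b) →
        s z = z ∧ s w = w := by
      intro z w hzw hz1 hz2
      have hza : z ≠ a := fun h => outDeg_pos hzw (by rw [h]; exact C1.hla)
      have hzb : z ≠ b := fun h => outDeg_pos hzw (by rw [h]; exact C1.hlb)
      have hwa : w ≠ a := by
        rintro rfl
        exact hz1 (by rw [parent_unique C1.ina hzw C1.hpa])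
      have hwb : w ≠ b := by
        rintro rfl
        exact hz2 (by rw [parent_unique C1.inb hzw C1.hpb])
      exact ⟨Equiv.swap_apply_of_ne_of_ne hza hzb, Equiv.swap_apply_of_ne_of_ne hwa hwb⟩
    constructor
    · rintro (heq | ⟨hA, h2, h3, h4⟩)
      · left
        have h1 : s x = u := congrArg Prod.fst heq
        have h2 : s y = a := congrArg Prod.snd heq
        have : x = s u := by rw [← h1, hss]
        have hy : y = s a := by rw [← h2, hss]
        rw [this, hy, hsu, hsa]
      · right
        obtain ⟨hfx, hfy⟩ := fixer _ _ hA h3 h4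
        rw [hss] at hfx hfy
        rw [← hfx, ← hfy] at hA h2 h3 h4
        exact ⟨hA, h2, h4, h3⟩
    · rintro (heq | ⟨hA, h2, h3, h4⟩)
      · left
        have h1 : x = u := congrArg Prod.fst heq
        have h2 : y = b := congrArg Prod.snd heq
        rw [h1, h2, hsu, hsb]
      · right
        obtain ⟨hfx, hfy⟩ := fixer _ _ hA h4 h3
        rw [hfx, hfy]
        exact ⟨hA, h2, h4, h3⟩

end Digraph'

namespace Digraph'

lemma RedCtx.toStep {N P : Digraph'} {X : Finset ℕ} {a b u p : ℕ}
    (C : RedCtx N P X a b u p) : CherryStep N P :=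
  ⟨a, b, Or.inl ⟨⟨C.hab, ⟨C.aV, C.hla⟩, ⟨C.bV, C.hlb⟩, p, C.hpa, C.hpb⟩,
    p, C.hpa, C.hpb, Or.inr ⟨u, C.hup, C.hPV, C.hPA⟩⟩⟩

lemma CutCtx.toStep {N P : Digraph'} {X : Finset ℕ} {a b pa pb ua q : ℕ}
    (C : CutCtx N P X a b pa pb ua q) : CherryStep N P :=
  ⟨a, b, Or.inr ⟨⟨C.hab, ⟨C.aV, C.hla⟩, ⟨C.bV, C.hlb⟩, pa, pb, C.hpaa, C.hpbb,
    C.hin2, C.hpapb⟩,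
    pa, pb, ua, q, C.hpaa, C.hpbb, C.hin2, C.hpapb, C.hua, C.hq, C.hqpa,
    C.hPV, C.hPA⟩⟩

lemma exists_reduce {N : Digraph'} {X : Finset ℕ} (hph : N.IsPhylo X) {a b u p : ℕ}
    (hab : a ≠ b) (hla : N.outDeg a = 0) (hlb : N.outDeg b = 0)
    (hpa : (p, a) ∈ N.A) (hpb : (p, b) ∈ N.A) (hup : (u, p) ∈ N.A) :
    ∃ P, RedCtx N P X a b u p := by
  have haV : a ∈ N.V := (N.mem_V _ hpa).2
  have hbV : b ∈ N.V := (N.mem_V _ hpb).2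
  have huV : u ∈ N.V := (N.mem_V _ hup).1
  have hout2 : N.outDeg p = 2 := (hph.outDeg_two hpa hpb hab).1
  have hinp : N.inDeg p = 1 := by
    have h2 := (hph.outDeg_two hpa hpb hab).2
    have h1 := inDeg_pos hup
    omega
  have hina : N.inDeg a = 1 := hph.leaf_inDeg haV hla
  have hinb : N.inDeg b = 1 := hph.leaf_inDeg hbV hlb
  have hup_ne : u ≠ p := arc_ne_s11 hph.acyclic hup
  have hua_ne : u ≠ a := fun h => outDeg_pos hup (by rw [h]; exact hla)
  have hub_ne : u ≠ b := fun h => outDeg_pos hup (by rw [h]; exact hlb)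
  have hpa_ne : p ≠ a := fun h => outDeg_pos hpa (by rw [h]; exact hla)
  have hpb_ne : p ≠ b := fun h => outDeg_pos hpa (by rw [h]; exact hlb)
  refine ⟨mkD ((N.V.erase b).erase p)
    (insert (u, a) (((N.A.erase (u, p)).erase (p, a)).erase (p, b))), ?_⟩
  have hA : (mkD ((N.V.erase b).erase p)
      (insert (u, a) (((N.A.erase (u, p)).erase (p, a)).erase (p, b)))).A =
      insert (u, a) (((N.A.erase (u, p)).erase (p, a)).erase (p, b)) := by
    apply mkD_A
    intro e he
    simp only [Finset.mem_insert, Finset.mem_erase] at he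
    rcases he with rfl | ⟨h3, h2, h1, hA⟩
    · constructor
      · simp only [Finset.mem_erase]
        exact ⟨hup_ne, hub_ne, huV⟩
      · simp only [Finset.mem_erase]
        exact ⟨Ne.symm hpa_ne, hab, haV⟩
    · obtain ⟨x, y⟩ := e
      have hxV : x ∈ N.V := (N.mem_V _ hA).1
      have hyV : y ∈ N.V := (N.mem_V _ hA).2
      constructor
      · simp only [Finset.mem_erase]
        refine ⟨?_, ?_, hxV⟩
        · rintro rfl
          rcases child_eq hout2 hpa hpb hab hA with rfl | rfl
          · exact h2 rfl
          · exact h3 rfl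
        · rintro rfl
          exact outDeg_pos hA hlb
      · simp only [Finset.mem_erase]
        refine ⟨?_, ?_, hyV⟩
        · rintro rfl
          exact h1 (by rw [parent_unique hinp hA hup])
        · rintro rfl
          exact h3 (by rw [parent_unique hinb hA hpb])
  exact ⟨hph, hab, hla, hlb, hpa, hpb, hup, rfl, hA⟩

lemma exists_cut {N : Digraph'} {X : Finset ℕ} (hph : N.IsPhylo X)
    {a b pa pb ua q : ℕ}
    (hab : a ≠ b) (hla : N.outDeg a = 0) (hlb : N.outDeg b = 0)
    (hpaa : (pa, a) ∈ N.A) (hpbb : (pb, b) ∈ N.A) (hin2 : N.inDeg pb = 2)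
    (hpapb : (pa, pb) ∈ N.A) (hua : (ua, pa) ∈ N.A) (hq : (q, pb) ∈ N.A)
    (hqpa : q ≠ pa) :
    ∃ P, CutCtx N P X a b pa pb ua q := by
  have haV : a ∈ N.V := (N.mem_V _ hpaa).2
  have hbV : b ∈ N.V := (N.mem_V _ hpbb).2
  have hpbV : pb ∈ N.V := (N.mem_V _ hpbb).1
  have huaV : ua ∈ N.V := (N.mem_V _ hua).1
  have hqV : q ∈ N.V := (N.mem_V _ hq).1
  have hina : N.inDeg a = 1 := hph.leaf_inDeg haV hla
  have hinb : N.inDeg b = 1 := hph.leaf_inDeg hbV hlb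
  have hapb : a ≠ pb := fun h => by rw [h] at hina; omega
  have hout2 : N.outDeg pa = 2 := (hph.outDeg_two hpaa hpapb hapb).1
  have hinpa : N.inDeg pa = 1 := by
    have h2 := (hph.outDeg_two hpaa hpapb hapb).2
    have h1 := inDeg_pos hua
    omega
  have houtpb : N.outDeg pb = 1 := by
    rcases hph.degrees pb hpbV with ⟨h1, h2⟩ | ⟨h1, h2⟩ | ⟨h1, h2⟩ | ⟨h1, h2⟩ <;> omega
  have huapa : ua ≠ pa := arc_ne_s11 hph.acyclic hua
  have hqpb : q ≠ pb := arc_ne_s11 hph.acyclic hq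
  have hpapb_ne : pa ≠ pb := arc_ne_s11 hph.acyclic hpapb
  have hua_a : ua ≠ a := fun h => outDeg_pos hua (by rw [h]; exact hla)
  have hua_b : ua ≠ b := fun h => outDeg_pos hua (by rw [h]; exact hlb)
  have hq_a : q ≠ a := fun h => outDeg_pos hq (by rw [h]; exact hla)
  have hq_b : q ≠ b := fun h => outDeg_pos hq (by rw [h]; exact hlb)
  have hpa_a : pa ≠ a := fun h => outDeg_pos hpaa (by rw [h]; exact hla)
  have hpa_b : pa ≠ b := fun h => outDeg_pos hpaa (by rw [h]; exact hlb)
  have hpb_a : pb ≠ a := fun h => outDeg_pos hpbb (by rw [h]; exact hla)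
  have hpb_b : pb ≠ b := fun h => outDeg_pos hpbb (by rw [h]; exact hlb)
  have huapb : ua ≠ pb := fun h => by
    have : pa = b := child_unique houtpb (by rw [← h]; exact hua) hpbb
    exact hpa_b this
  refine ⟨mkD ((N.V.erase pa).erase pb)
    (insert (ua, a) (insert (q, b)
      (((((N.A.erase (pa, pb)).erase (ua, pa)).erase (pa, a)).erase (q, pb)).erase (pb, b)))), ?_⟩
  have hA : (mkD ((N.V.erase pa).erase pb) (insert (ua, a) (insert (q, b)
      (((((N.A.erase (pa, pb)).erase (ua, pa)).erase (pa, a)).erase (q, pb)).erase (pb, b))))).A =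
      insert (ua, a) (insert (q, b)
      (((((N.A.erase (pa, pb)).erase (ua, pa)).erase (pa, a)).erase (q, pb)).erase (pb, b))) := by
    apply mkD_A
    intro e he
    simp only [Finset.mem_insert, Finset.mem_erase] at he
    rcases he with rfl | rfl | ⟨h5, h4, h3, h2, h1, hA⟩
    · constructor
      · simp only [Finset.mem_erase]
        exact ⟨huapb, huapa, huaV⟩
      · simp only [Finset.mem_erase]
        exact ⟨Ne.symm hpb_a, Ne.symm hpa_a, haV⟩
    · constructor
      · simp only [Finset.mem_erase]
        exact ⟨hqpb, hqpa, hqV⟩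
      · simp only [Finset.mem_erase]
        exact ⟨Ne.symm hpb_b, Ne.symm hpa_b, hbV⟩
    · obtain ⟨x, y⟩ := e
      have hxV : x ∈ N.V := (N.mem_V _ hA).1
      have hyV : y ∈ N.V := (N.mem_V _ hA).2
      constructor
      · simp only [Finset.mem_erase]
        refine ⟨?_, ?_, hxV⟩
        · rintro rfl
          have : y = b := child_unique houtpb hA hpbb
          exact h5 (by rw [this])
        · rintro rfl
          rcases child_eq hout2 hpaa hpapb hapb hA with rfl | rfl
          · exact h3 rfl
          · exact h1 rfl
      · simp only [Finset.mem_erase]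
        refine ⟨?_, ?_, hyV⟩
        · rintro rfl
          by_cases hxpa : x = pa
          · exact h1 (by rw [hxpa])
          · exact h4 (by rw [second_parent hin2 hpapb hq (Ne.symm hqpa) hA hxpa])
        · rintro rfl
          exact h2 (by rw [parent_unique hinpa hA hua])
  exact ⟨hph, hab, hla, hlb, hpaa, hpbb, hin2, hpapb, hua, hq, hqpa, rfl, hA⟩

end Digraph'

namespace Digraph'

lemma pair_ne_snd {x y x' y' : ℕ} (h : y ≠ y') : ((x, y) : ℕ × ℕ) ≠ (x', y') :=
  fun heq => h (congrArg Prod.snd heq)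

lemma pair_ne_fst {x y x' y' : ℕ} (h : x ≠ x') : ((x, y) : ℕ × ℕ) ≠ (x', y') :=
  fun heq => h (congrArg Prod.fst heq)

lemma diamond_RR_disj {N P Q : Digraph'} {X : Finset ℕ} {a b u p c d u' p' : ℕ}
    (C1 : RedCtx N P X a b u p) (C2 : RedCtx N Q X c d u' p')
    (hac : a ≠ c) (had : a ≠ d) (hbc : b ≠ c) (hbd : b ≠ d) (hpp : p ≠ p') :
    ∃ R, CherryStep P R ∧ CherryStep Q R := by
  have hpc : p ≠ c := ne_of_out C1.out2 C2.hla (by omega)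
  have hpd : p ≠ d := ne_of_out C1.out2 C2.hlb (by omega)
  have hp'a : p' ≠ a := ne_of_out C2.out2 C1.hla (by omega)
  have hp'b : p' ≠ b := ne_of_out C2.out2 C1.hlb (by omega)
  have hup' : u ≠ p' := by
    intro h
    have harc := C1.hup
    rw [h] at harc
    rcases child_eq C2.out2 C2.hpa C2.hpb C2.hab harc with h1 | h1
    · exact hpc h1
    · exact hpd h1
  have hu'p : u' ≠ p := by
    intro h
    have harc := C2.hup
    rw [h] at harc
    rcases child_eq C1.out2 C1.hpa C1.hpb C1.hab harc with h1 | h1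
    · exact hp'a.symm (h1 ▸ rfl) |>.elim
    · exact absurd h1 (by intro h2; exact hp'b (by rw [← h2]) |>.elim)
  have huc : u ≠ c := fun h => outDeg_pos C1.hup (by rw [h]; exact C2.hla)
  have hud : u ≠ d := fun h => outDeg_pos C1.hup (by rw [h]; exact C2.hlb)
  have hu'a : u' ≠ a := fun h => outDeg_pos C2.hup (by rw [h]; exact C1.hla)
  have hu'b : u' ≠ b := fun h => outDeg_pos C2.hup (by rw [h]; exact C1.hlb)
  -- the cherry (c,d) survives in P
  have hPc : (p', c) ∈ P.A := C1.mem_A.mpr (Or.inr ⟨C2.hpa,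
    pair_ne_snd (Ne.symm hpc), pair_ne_snd (Ne.symm hac), pair_ne_snd (Ne.symm hbc)⟩)
  have hPd : (p', d) ∈ P.A := C1.mem_A.mpr (Or.inr ⟨C2.hpb,
    pair_ne_snd (Ne.symm hpd), pair_ne_snd (Ne.symm had), pair_ne_snd (Ne.symm hbd)⟩)
  have hPu' : (u', p') ∈ P.A := C1.mem_A.mpr (Or.inr ⟨C2.hup,
    pair_ne_snd (Ne.symm hpp), pair_ne_snd hp'a, pair_ne_snd hp'b⟩)
  have houtc : P.outDeg c = 0 := by
    rw [C1.outDeg_eq (Ne.symm hbc) (Ne.symm hpc)]; exact C2.hla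
  have houtd : P.outDeg d = 0 := by
    rw [C1.outDeg_eq (Ne.symm hbd) (Ne.symm hpd)]; exact C2.hlb
  obtain ⟨R, CR⟩ := exists_reduce C1.isPhylo C2.hab houtc houtd hPc hPd hPu'
  -- the cherry (a,b) survives in Q
  have hQa : (p, a) ∈ Q.A := C2.mem_A.mpr (Or.inr ⟨C1.hpa,
    pair_ne_snd hp'a.symm, pair_ne_snd hac, pair_ne_snd had⟩)
  have hQb : (p, b) ∈ Q.A := C2.mem_A.mpr (Or.inr ⟨C1.hpb,
    pair_ne_snd hp'b.symm, pair_ne_snd hbc, pair_ne_snd hbd⟩)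
  have hQu : (u, p) ∈ Q.A := C2.mem_A.mpr (Or.inr ⟨C1.hup,
    pair_ne_snd hpp, pair_ne_snd hpc, pair_ne_snd hpd⟩)
  have houta : Q.outDeg a = 0 := by
    rw [C2.outDeg_eq had hp'a.symm]; exact C1.hla
  have houtb : Q.outDeg b = 0 := by
    rw [C2.outDeg_eq hbd hp'b.symm]; exact C1.hlb
  obtain ⟨R', CR'⟩ := exists_reduce C2.isPhylo C1.hab houta houtb hQa hQb hQu
  refine ⟨R, CR.toStep, ?_⟩
  suffices h : R = R' by rw [h]; exact CR'.toStep
  apply deq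
  · rw [CR.hPV, CR'.hPV, C1.hPV, C2.hPV]
    ext x
    simp only [Finset.mem_erase]
    tauto
  · apply Finset.ext
    intro e
    rw [CR.mem_A, CR'.mem_A, C1.mem_A, C2.mem_A]
    constructor
    · rintro (rfl | ⟨rfl | ⟨hA, m1, m2, m3⟩, n1, n2, n3⟩)
      · exact Or.inr ⟨Or.inl rfl, pair_ne_snd hpc.symm, pair_ne_snd hac.symm,
          pair_ne_snd hbc.symm⟩
      · exact Or.inl rfl
      · exact Or.inr ⟨Or.inr ⟨hA, n1, n2, n3⟩, m1, m2, m3⟩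
    · rintro (rfl | ⟨rfl | ⟨hA, m1, m2, m3⟩, n1, n2, n3⟩)
      · exact Or.inr ⟨Or.inl rfl, pair_ne_snd hp'a.symm, pair_ne_snd hac,
          pair_ne_snd had⟩
      · exact Or.inl rfl
      · exact Or.inr ⟨Or.inr ⟨hA, n1, n2, n3⟩, m1, m2, m3⟩
    
end Digraph'

namespace Digraph'

lemma diamond_RC {N P Q : Digraph'} {X : Finset ℕ} {a b u p c d pc pd uc q2 : ℕ}
    (C1 : RedCtx N P X a b u p) (C2 : CutCtx N Q X c d pc pd uc q2) :
    ∃ R, CherryStep P R ∧ CherryStep Q R := by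
  have hpda : pd ≠ a := ne_of_in C2.hin2 C1.ina (by omega)
  have hpdb : pd ≠ b := ne_of_in C2.hin2 C1.inb (by omega)
  have hpdp : pd ≠ p := ne_of_in C2.hin2 C1.inp (by omega)
  have hac : a ≠ c := by
    intro h
    have harc := C1.hpa
    rw [h] at harc
    have hp : p = pc := parent_unique C2.ina harc C2.hpaa
    have harc2 := C2.hpapb
    rw [← hp] at harc2
    rcases child_eq C1.out2 C1.hpa C1.hpb C1.hab harc2 with h1 | h1
    · exact hpda h1
    · exact hpdb h1
  have had : a ≠ d := by
    intro h
    have harc := C2.hpbb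
    rw [← h] at harc
    exact hpdp (parent_unique C1.ina harc C1.hpa ▸ rfl)
  have hbc : b ≠ c := by
    intro h
    have harc := C1.hpb
    rw [h] at harc
    have hp : p = pc := parent_unique C2.ina harc C2.hpaa
    have harc2 := C2.hpapb
    rw [← hp] at harc2
    rcases child_eq C1.out2 C1.hpa C1.hpb C1.hab harc2 with h1 | h1
    · exact hpda h1
    · exact hpdb h1
  have hbd : b ≠ d := by
    intro h
    have harc := C2.hpbb
    rw [← h] at harc
    exact hpdp (parent_unique C1.inb harc C1.hpb ▸ rfl)
  have hppc : p ≠ pc := by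
    intro h
    have harc := C1.hpa
    rw [h] at harc
    rcases child_eq C2.out2pa C2.hpaa C2.hpapb C2.apb_ne harc with h1 | h1
    · exact hac h1
    · exact (ne_of_in C1.ina C2.hin2 (by omega)) h1
  have hcp : c ≠ p := ne_of_out C2.hla C1.out2 (by omega)
  have hdp : d ≠ p := ne_of_out C2.hlb C1.out2 (by omega)
  have hpca : pc ≠ a := ne_of_out C2.out2pa C1.hla (by omega)
  have hpcb : pc ≠ b := ne_of_out C2.out2pa C1.hlb (by omega)
  -- the ret-cherry (c,d) survives in P
  have hPc : (pc, c) ∈ P.A := C1.mem_A.mpr (Or.inr ⟨C2.hpaa,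
    pair_ne_snd hcp, pair_ne_snd (Ne.symm hac), pair_ne_snd (Ne.symm hbc)⟩)
  have hPd : (pd, d) ∈ P.A := C1.mem_A.mpr (Or.inr ⟨C2.hpbb,
    pair_ne_snd hdp, pair_ne_snd (Ne.symm had), pair_ne_snd (Ne.symm hbd)⟩)
  have hPpcpd : (pc, pd) ∈ P.A := C1.mem_A.mpr (Or.inr ⟨C2.hpapb,
    pair_ne_snd hpdp, pair_ne_snd hpda, pair_ne_snd hpdb⟩)
  have hPuc : (uc, pc) ∈ P.A := C1.mem_A.mpr (Or.inr ⟨C2.hua,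
    pair_ne_snd (Ne.symm hppc), pair_ne_snd hpca, pair_ne_snd hpcb⟩)
  have hPq2 : (q2, pd) ∈ P.A := C1.mem_A.mpr (Or.inr ⟨C2.hq,
    pair_ne_snd hpdp, pair_ne_snd hpda, pair_ne_snd hpdb⟩)
  have houtc : P.outDeg c = 0 := by
    rw [C1.outDeg_eq (Ne.symm hbc) hcp]; exact C2.hla
  have houtd : P.outDeg d = 0 := by
    rw [C1.outDeg_eq (Ne.symm hbd) hdp]; exact C2.hlb
  have hin2P : P.inDeg pd = 2 := by
    rw [C1.inDeg_eq hpdb hpdp]; exact C2.hin2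
  obtain ⟨R, CR⟩ := exists_cut C1.isPhylo C2.hab houtc houtd hPc hPd hin2P hPpcpd
    hPuc hPq2 C2.hqpa
  -- the cherry (a,b) survives in Q
  have hQa : (p, a) ∈ Q.A := C2.mem_A.mpr (Or.inr (Or.inr ⟨C1.hpa,
    pair_ne_snd hpda.symm, pair_ne_snd hpca.symm, pair_ne_snd hac,
    pair_ne_snd hpda.symm, pair_ne_snd had⟩))
  have hQb : (p, b) ∈ Q.A := C2.mem_A.mpr (Or.inr (Or.inr ⟨C1.hpb,
    pair_ne_snd hpdb.symm, pair_ne_snd hpcb.symm, pair_ne_snd hbc,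
    pair_ne_snd hpdb.symm, pair_ne_snd hbd⟩))
  have hQu : (u, p) ∈ Q.A := C2.mem_A.mpr (Or.inr (Or.inr ⟨C1.hup,
    pair_ne_snd hpdp.symm, pair_ne_snd hppc, pair_ne_snd (Ne.symm hcp),
    pair_ne_snd hpdp.symm, pair_ne_snd (Ne.symm hdp)⟩))
  have houta : Q.outDeg a = 0 := by
    rw [C2.outDeg_eq hpca.symm hpda.symm]; exact C1.hla
  have houtb : Q.outDeg b = 0 := by
    rw [C2.outDeg_eq hpcb.symm hpdb.symm]; exact C1.hlb
  obtain ⟨R', CR'⟩ := exists_reduce C2.isPhylo C1.hab houta houtb hQa hQb hQu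
  refine ⟨R, CR.toStep, ?_⟩
  suffices h : R = R' by rw [h]; exact CR'.toStep
  apply deq
  · rw [CR.hPV, CR'.hPV, C1.hPV, C2.hPV]
    ext x
    simp only [Finset.mem_erase]
    tauto
  · apply Finset.ext
    intro e
    rw [CR.mem_A, CR'.mem_A, C1.mem_A, C2.mem_A]
    constructor
    · rintro (rfl | rfl | ⟨rfl | ⟨hA, m1, m2, m3⟩, n1, n2, n3, n4, n5⟩)
      · exact Or.inr ⟨Or.inl rfl, pair_ne_snd hcp,
          pair_ne_snd hac.symm, pair_ne_snd hbc.symm⟩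
      · exact Or.inr ⟨Or.inr (Or.inl rfl), pair_ne_snd hdp,
          pair_ne_snd had.symm, pair_ne_snd hbd.symm⟩
      · exact Or.inl rfl
      · exact Or.inr ⟨Or.inr (Or.inr ⟨hA, n1, n2, n3, n4, n5⟩), m1, m2, m3⟩
    · rintro (rfl | ⟨rfl | rfl | ⟨hA, m1, m2, m3, m4, m5⟩, n1, n2, n3⟩)
      · exact Or.inr (Or.inr ⟨Or.inl rfl, pair_ne_snd hpda.symm,
          pair_ne_snd hpca.symm, pair_ne_snd hac, pair_ne_snd hpda.symm,
          pair_ne_snd had⟩)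
      · exact Or.inl rfl
      · exact Or.inr (Or.inl rfl)
      · exact Or.inr (Or.inr ⟨Or.inr ⟨hA, n1, n2, n3⟩, m1, m2, m3, m4, m5⟩)

end Digraph'

namespace Digraph'

lemma diamond_CC_shared {N P Q : Digraph'} {X : Finset ℕ} {a b pa pb ua q c uc : ℕ}
    (C1 : CutCtx N P X a b pa pb ua q) (C2 : CutCtx N Q X c b q pb uc pa)
    (hac : a ≠ c) :
    ∃ R, CherryStep P R ∧ CherryStep Q R := by
  have hcpa : c ≠ pa := ne_of_out C2.hla C1.out2pa (by omega)
  have hcpb : c ≠ pb := ne_of_out C2.hla C1.outpb (by omega)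
  have hqa : q ≠ a := C1.qa_ne
  have hqb : q ≠ b := C1.qb_ne
  have hpabA : (pa, b) ∉ N.A := by
    intro h
    rcases child_eq C1.out2pa C1.hpaa C1.hpapb C1.apb_ne h with h1 | h1
    · exact C1.hab h1.symm
    · exact C1.pbb_ne h1.symm
  -- the cherry (c, b) in P
  have hPc : (q, c) ∈ P.A := C1.mem_A.mpr (Or.inr (Or.inr ⟨C2.hpaa,
    pair_ne_snd hcpb, pair_ne_snd hcpa, pair_ne_snd (Ne.symm hac),
    pair_ne_snd hcpb, pair_ne_snd C2.hab⟩))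
  have hPb : (q, b) ∈ P.A := C1.mem_A.mpr (Or.inr (Or.inl rfl))
  have hPuc : (uc, q) ∈ P.A := C1.mem_A.mpr (Or.inr (Or.inr ⟨C2.hua,
    pair_ne_snd C1.qpb_ne, pair_ne_snd C1.hqpa, pair_ne_snd hqa,
    pair_ne_snd C1.qpb_ne, pair_ne_snd hqb⟩))
  have houtc : P.outDeg c = 0 := by
    rw [C1.outDeg_eq hcpa hcpb]; exact C2.hla
  obtain ⟨R, CR⟩ := exists_reduce C1.isPhylo C2.hab houtc C1.outb hPc hPb hPuc
  -- the cherry (a, b) in Q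
  have hQa : (pa, a) ∈ Q.A := C2.mem_A.mpr (Or.inr (Or.inr ⟨C1.hpaa,
    pair_ne_snd C1.pba_ne.symm, pair_ne_snd hqa.symm, pair_ne_snd hac,
    pair_ne_snd C1.pba_ne.symm, pair_ne_snd C1.hab⟩))
  have hQb : (pa, b) ∈ Q.A := C2.mem_A.mpr (Or.inr (Or.inl rfl))
  have hQua : (ua, pa) ∈ Q.A := C2.mem_A.mpr (Or.inr (Or.inr ⟨C1.hua,
    pair_ne_snd C1.papb_ne, pair_ne_snd C1.hqpa.symm, pair_ne_snd hcpa.symm,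
    pair_ne_snd C1.papb_ne, pair_ne_snd C1.pab_ne⟩))
  have houta : Q.outDeg a = 0 := by
    rw [C2.outDeg_eq hqa.symm C1.pba_ne.symm]; exact C1.hla
  obtain ⟨R', CR'⟩ := exists_reduce C2.isPhylo C1.hab houta C2.outb hQa hQb hQua
  refine ⟨R, CR.toStep, ?_⟩
  suffices h : R = R' by rw [h]; exact CR'.toStep
  apply deq
  · rw [CR.hPV, CR'.hPV, C1.hPV, C2.hPV]
    ext x
    simp only [Finset.mem_erase]
    tauto
  · apply Finset.ext
    intro e
    rw [CR.mem_A, CR'.mem_A, C1.mem_A, C2.mem_A]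
    constructor
    · rintro (rfl | ⟨rfl | rfl | ⟨hA, m1, m2, m3, m4, m5⟩, n1, n2, n3⟩)
      · exact Or.inr ⟨Or.inl rfl, pair_ne_snd hcpa, pair_ne_snd hac.symm,
          pair_ne_snd C2.hab⟩
      · exact Or.inl rfl
      · exact absurd rfl n3
      · exact Or.inr ⟨Or.inr (Or.inr ⟨hA, m4, n1, n2, m1, m5⟩), m2, m3,
          fun heq => hpabA (heq ▸ hA)⟩
    · rintro (rfl | ⟨rfl | rfl | ⟨hA, m1, m2, m3, m4, m5⟩, n1, n2, n3⟩)
      · exact Or.inr ⟨Or.inl rfl, pair_ne_snd hqa.symm, pair_ne_snd hac,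
          pair_ne_snd C1.hab⟩
      · exact Or.inl rfl
      · exact absurd rfl n3
      · exact Or.inr ⟨Or.inr (Or.inr ⟨hA, m4, n1, n2, m1, m5⟩), m2, m3,
          fun heq => C1.qbA (heq ▸ hA)⟩

lemma diamond_CC_disj {N P Q : Digraph'} {X : Finset ℕ}
    {a b pa pb ua q c d pc pd uc q2 : ℕ}
    (C1 : CutCtx N P X a b pa pb ua q) (C2 : CutCtx N Q X c d pc pd uc q2)
    (hac : a ≠ c) (had : a ≠ d) (hbc : b ≠ c) (hbd : b ≠ d) (hpbpd : pb ≠ pd) :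
    ∃ R, CherryStep P R ∧ CherryStep Q R := by
  have hpapd : pa ≠ pd := ne_of_in C1.inpa C2.hin2 (by omega)
  have hpcpb : pc ≠ pb := ne_of_in C2.inpa C1.hin2 (by omega)
  have hpapc : pa ≠ pc := by
    intro h
    have harc := C2.hpaa
    rw [← h] at harc
    rcases child_eq C1.out2pa C1.hpaa C1.hpapb C1.apb_ne harc with h1 | h1
    · exact hac h1.symm
    · exact (ne_of_out C2.hla C1.outpb (by omega)) h1
  have hcpa : c ≠ pa := ne_of_out C2.hla C1.out2pa (by omega)
  have hcpb : c ≠ pb := ne_of_out C2.hla C1.outpb (by omega)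
  have hdpa : d ≠ pa := ne_of_out C2.hlb C1.out2pa (by omega)
  have hdpb : d ≠ pb := ne_of_out C2.hlb C1.outpb (by omega)
  have hapc : a ≠ pc := ne_of_out C1.hla C2.out2pa (by omega)
  have hapd : a ≠ pd := ne_of_out C1.hla C2.outpb (by omega)
  have hbpc : b ≠ pc := ne_of_out C1.hlb C2.out2pa (by omega)
  have hbpd : b ≠ pd := ne_of_out C1.hlb C2.outpb (by omega)
  have hpdpb : pd ≠ pb := Ne.symm hpbpd
  have hpcpa : pc ≠ pa := Ne.symm hpapc
  -- the ret-cherry (c, d) survives in P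
  have hPc : (pc, c) ∈ P.A := C1.mem_A.mpr (Or.inr (Or.inr ⟨C2.hpaa,
    pair_ne_snd hcpb, pair_ne_snd hcpa, pair_ne_snd (Ne.symm hac),
    pair_ne_snd hcpb, pair_ne_snd (Ne.symm hbc)⟩))
  have hPd : (pd, d) ∈ P.A := C1.mem_A.mpr (Or.inr (Or.inr ⟨C2.hpbb,
    pair_ne_snd hdpb, pair_ne_snd hdpa, pair_ne_snd (Ne.symm had),
    pair_ne_snd hdpb, pair_ne_snd (Ne.symm hbd)⟩))
  have hPpcpd : (pc, pd) ∈ P.A := C1.mem_A.mpr (Or.inr (Or.inr ⟨C2.hpapb,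
    pair_ne_snd hpdpb, pair_ne_snd hpapd.symm, pair_ne_snd (Ne.symm hapd),
    pair_ne_snd hpdpb, pair_ne_snd (Ne.symm hbpd)⟩))
  have hPuc : (uc, pc) ∈ P.A := C1.mem_A.mpr (Or.inr (Or.inr ⟨C2.hua,
    pair_ne_snd hpcpb, pair_ne_snd hpcpa, pair_ne_snd (Ne.symm hapc),
    pair_ne_snd hpcpb, pair_ne_snd (Ne.symm hbpc)⟩))
  have hPq2 : (q2, pd) ∈ P.A := C1.mem_A.mpr (Or.inr (Or.inr ⟨C2.hq,
    pair_ne_snd hpdpb, pair_ne_snd hpapd.symm, pair_ne_snd (Ne.symm hapd),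
    pair_ne_snd hpdpb, pair_ne_snd (Ne.symm hbpd)⟩))
  have houtc : P.outDeg c = 0 := by
    rw [C1.outDeg_eq hcpa hcpb]; exact C2.hla
  have houtd : P.outDeg d = 0 := by
    rw [C1.outDeg_eq hdpa hdpb]; exact C2.hlb
  have hin2P : P.inDeg pd = 2 := by
    rw [C1.inDeg_eq hpapd.symm hpdpb]; exact C2.hin2
  obtain ⟨R, CR⟩ := exists_cut C1.isPhylo C2.hab houtc houtd hPc hPd hin2P hPpcpd
    hPuc hPq2 C2.hqpa
  -- the ret-cherry (a, b) survives in Q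
  have hQa : (pa, a) ∈ Q.A := C2.mem_A.mpr (Or.inr (Or.inr ⟨C1.hpaa,
    pair_ne_snd hapd, pair_ne_snd hapc, pair_ne_snd hac,
    pair_ne_snd hapd, pair_ne_snd had⟩))
  have hQb : (pb, b) ∈ Q.A := C2.mem_A.mpr (Or.inr (Or.inr ⟨C1.hpbb,
    pair_ne_snd hbpd, pair_ne_snd hbpc, pair_ne_snd hbc,
    pair_ne_snd hbpd, pair_ne_snd hbd⟩))
  have hQpapb : (pa, pb) ∈ Q.A := C2.mem_A.mpr (Or.inr (Or.inr ⟨C1.hpapb,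
    pair_ne_snd hpbpd, pair_ne_snd hpcpb.symm, pair_ne_snd hcpb.symm,
    pair_ne_snd hpbpd, pair_ne_snd hdpb.symm⟩))
  have hQua : (ua, pa) ∈ Q.A := C2.mem_A.mpr (Or.inr (Or.inr ⟨C1.hua,
    pair_ne_snd hpapd, pair_ne_snd hpapc, pair_ne_snd hcpa.symm,
    pair_ne_snd hpapd, pair_ne_snd hdpa.symm⟩))
  have hQq : (q, pb) ∈ Q.A := C2.mem_A.mpr (Or.inr (Or.inr ⟨C1.hq,
    pair_ne_snd hpbpd, pair_ne_snd hpcpb.symm, pair_ne_snd hcpb.symm,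
    pair_ne_snd hpbpd, pair_ne_snd hdpb.symm⟩))
  have houta : Q.outDeg a = 0 := by
    rw [C2.outDeg_eq hapc hapd]; exact C1.hla
  have houtb : Q.outDeg b = 0 := by
    rw [C2.outDeg_eq hbpc hbpd]; exact C1.hlb
  have hin2Q : Q.inDeg pb = 2 := by
    rw [C2.inDeg_eq hpcpb.symm hpbpd]; exact C1.hin2
  obtain ⟨R', CR'⟩ := exists_cut C2.isPhylo C1.hab houta houtb hQa hQb hin2Q hQpapb
    hQua hQq C1.hqpa
  refine ⟨R, CR.toStep, ?_⟩
  suffices h : R = R' by rw [h]; exact CR'.toStep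
  apply deq
  · rw [CR.hPV, CR'.hPV, C1.hPV, C2.hPV]
    ext x
    simp only [Finset.mem_erase]
    tauto
  · apply Finset.ext
    intro e
    rw [CR.mem_A, CR'.mem_A, C1.mem_A, C2.mem_A]
    constructor
    · rintro (rfl | rfl | ⟨rfl | rfl | ⟨hA, m1, m2, m3, m4, m5⟩, n1, n2, n3, n4, n5⟩)
      · exact Or.inr (Or.inr ⟨Or.inl rfl, pair_ne_snd hcpb, pair_ne_snd hcpa,
          pair_ne_snd hac.symm, pair_ne_snd hcpb, pair_ne_snd hbc.symm⟩)
      · exact Or.inr (Or.inr ⟨Or.inr (Or.inl rfl), pair_ne_snd hdpb,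
          pair_ne_snd hdpa, pair_ne_snd had.symm, pair_ne_snd hdpb,
          pair_ne_snd hbd.symm⟩)
      · exact Or.inl rfl
      · exact Or.inr (Or.inl rfl)
      · exact Or.inr (Or.inr ⟨Or.inr (Or.inr ⟨hA, n1, n2, n3, n4, n5⟩),
          m1, m2, m3, m4, m5⟩)
    · rintro (rfl | rfl | ⟨rfl | rfl | ⟨hA, m1, m2, m3, m4, m5⟩, n1, n2, n3, n4, n5⟩)
      · exact Or.inr (Or.inr ⟨Or.inl rfl, pair_ne_snd hapd,
          pair_ne_snd hapc, pair_ne_snd hac, pair_ne_snd hapd,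
          pair_ne_snd had⟩)
      · exact Or.inr (Or.inr ⟨Or.inr (Or.inl rfl), pair_ne_snd hbpd,
          pair_ne_snd hbpc, pair_ne_snd hbc, pair_ne_snd hbpd,
          pair_ne_snd hbd⟩)
      · exact Or.inl rfl
      · exact Or.inr (Or.inl rfl)
      · exact Or.inr (Or.inr ⟨Or.inr (Or.inr ⟨hA, n1, n2, n3, n4, n5⟩),
          m1, m2, m3, m4, m5⟩)

end Digraph'

namespace Digraph'

lemma diamond_RR {N P Q : Digraph'} {X : Finset ℕ} {a b u p c d u' p' : ℕ}
    (C1 : RedCtx N P X a b u p) (C2 : RedCtx N Q X c d u' p') :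
    P = Q ∨ (∃ x y, Q = mapN (Equiv.swap x y) P) ∨
      (∃ R, CherryStep P R ∧ CherryStep Q R) := by
  by_cases hac : a = c
  · obtain rfl := hac
    have hp : p' = p := parent_unique C1.ina C2.hpa C1.hpa
    subst hp
    have hd : d = b := by
      rcases child_eq C1.out2 C1.hpa C1.hpb C1.hab C2.hpb with h | h
      · exact absurd h.symm C2.hab
      · exact h
    subst hd
    exact Or.inl (C1.det C2)
  · by_cases had : a = d
    · obtain rfl := had
      have hp : p' = p := parent_unique C1.ina C2.hpb C1.hpa
      subst hp
      have hc : c = b := by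
        rcases child_eq C1.out2 C1.hpa C1.hpb C1.hab C2.hpa with h | h
        · exact absurd h C2.hab
        · exact h
      have hu : u' = u := parent_unique C1.inp C2.hup C1.hup
      rw [hc, hu] at C2
      exact Or.inr (Or.inl ⟨a, b, diamond_swap C1 C2⟩)
    · by_cases hbc : b = c
      · obtain rfl := hbc
        have hp : p' = p := parent_unique C1.inb C2.hpa C1.hpb
        subst hp
        rcases child_eq C1.out2 C1.hpa C1.hpb C1.hab C2.hpb with h | h
        · exact absurd h.symm had
        · exact absurd h.symm C2.hab
      · by_cases hbd : b = d
        · obtain rfl := hbd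
          have hp : p' = p := parent_unique C1.inb C2.hpb C1.hpb
          subst hp
          rcases child_eq C1.out2 C1.hpa C1.hpb C1.hab C2.hpa with h | h
          · exact absurd h.symm hac
          · exact absurd h C2.hab
        · have hpp : p ≠ p' := by
            intro h
            have harc := C1.hpa
            rw [h] at harc
            rcases child_eq C2.out2 C2.hpa C2.hpb C2.hab harc with h1 | h1
            · exact hac h1
            · exact had h1
          exact Or.inr (Or.inr (diamond_RR_disj C1 C2 hac had hbc hbd hpp))

lemma diamond_CC {N P Q : Digraph'} {X : Finset ℕ}
    {a b pa pb ua q c d pc pd uc q2 : ℕ}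
    (C1 : CutCtx N P X a b pa pb ua q) (C2 : CutCtx N Q X c d pc pd uc q2) :
    P = Q ∨ (∃ R, CherryStep P R ∧ CherryStep Q R) := by
  by_cases hac : a = c
  · obtain rfl := hac
    have hp : pc = pa := parent_unique C1.ina C2.hpaa C1.hpaa
    subst hp
    have hpd : pd = pb := by
      rcases child_eq C1.out2pa C1.hpaa C1.hpapb C1.apb_ne C2.hpapb with h | h
      · exact absurd h (ne_of_in C2.hin2 C1.ina (by omega))
      · exact h
    subst hpd
    have hd : d = b := child_unique C1.outpb C2.hpbb C1.hpbb
    subst hd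
    have hu : uc = ua := parent_unique C1.inpa C2.hua C1.hua
    subst hu
    have hq2 : q2 = q := second_parent C1.hin2 C1.hpapb C1.hq (Ne.symm C1.hqpa)
      C2.hq C2.hqpa
    subst hq2
    exact Or.inl (C1.det C2)
  · by_cases had : a = d
    · obtain rfl := had
      have hp : pd = pa := parent_unique C1.ina C2.hpbb C1.hpaa
      exact absurd hp (ne_of_in C2.hin2 C1.inpa (by omega))
    · by_cases hbc : b = c
      · obtain rfl := hbc
        have hp : pc = pb := parent_unique C1.inb C2.hpaa C1.hpbb
        exact absurd hp (ne_of_out C2.out2pa C1.outpb (by omega))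
      · by_cases hbd : b = d
        · obtain rfl := hbd
          have hpd : pd = pb := parent_unique C1.inb C2.hpbb C1.hpbb
          subst hpd
          have hpcpa : pc ≠ pa := by
            intro h
            have harc := C2.hpaa
            rw [h] at harc
            rcases child_eq C1.out2pa C1.hpaa C1.hpapb C1.apb_ne harc with h1 | h1
            · exact hac h1.symm
            · exact (ne_of_out C2.hla C1.outpb (by omega)) h1
          have hpc : pc = q := second_parent C1.hin2 C1.hpapb C1.hq
            (Ne.symm C1.hqpa) C2.hpapb hpcpa
          subst hpc
          have hq2 : q2 = pa := second_parent C1.hin2 C1.hq C1.hpapb C1.hqpa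
            C2.hq C2.hqpa
          subst hq2
          exact Or.inr (diamond_CC_shared C1 C2 hac)
        · have hpbpd : pb ≠ pd := by
            intro h
            have harc := C2.hpbb
            rw [← h] at harc
            exact hbd (child_unique C1.outpb C1.hpbb harc)
          exact Or.inr (diamond_CC_disj C1 C2 hac had hbc hbd hpbpd)

lemma diamond {N P Q : Digraph'} {X : Finset ℕ} (hph : N.IsPhylo X)
    (h1 : CherryStep N P) (h2 : CherryStep N Q) :
    P = Q ∨ (∀ Z, CherryStep N Z → IsSingle Z) ∨
      (∃ x y, Q = mapN (Equiv.swap x y) P) ∨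
      (∃ R, CherryStep P R ∧ CherryStep Q R) := by
  rcases step_classify hph h1 with ⟨a, b, p, hpa, hpb, hab, hla, hlb, h0, _, _⟩ |
    ⟨a, b, u, p, C1⟩ | ⟨a, b, pa, pb, ua, q, C1⟩
  · exact Or.inr (Or.inl (hph.step_single_of_root hpa hpb hab hla hlb h0))
  all_goals rcases step_classify hph h2 with ⟨c, d, p', hpc, hpd, hcd, hlc, hld, h0', _, _⟩ |
    ⟨c, d, u', p', C2⟩ | ⟨c, d, pc, pd, uc, q2, C2⟩
  · exact Or.inr (Or.inl (hph.step_single_of_root hpc hpd hcd hlc hld h0'))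
  · rcases diamond_RR C1 C2 with h | h | h
    · exact Or.inl h
    · exact Or.inr (Or.inr (Or.inl h))
    · exact Or.inr (Or.inr (Or.inr h))
  · exact Or.inr (Or.inr (Or.inr (diamond_RC C1 C2)))
  · exact Or.inr (Or.inl (hph.step_single_of_root hpc hpd hcd hlc hld h0'))
  · obtain ⟨R, hR1, hR2⟩ := diamond_RC C2 C1
    exact Or.inr (Or.inr (Or.inr ⟨R, hR2, hR1⟩))
  · rcases diamond_CC C1 C2 with h | h
    · exact Or.inl h
    · exact Or.inr (Or.inr (Or.inr h))

/-- Orchardness is preserved by any single cherry step. -/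
lemma orchard_step : ∀ {N P : Digraph'}, NetOK N → IsOrchard N →
    CherryStep N P → IsOrchard P := by
  suffices h : ∀ {N M : Digraph'}, Relation.ReflTransGen CherryStep N M →
      IsSingle M → NetOK N → ∀ P, CherryStep N P → IsOrchard P by
    intro N P hok horch hstep
    obtain ⟨M, hseq, hM⟩ := horch
    exact h hseq hM hok P hstep
  intro N M hseq hM
  induction hseq using Relation.ReflTransGen.head_induction_on with
  | refl =>
    intro _ P hstep
    exact absurd hstep (no_step_of_single hM)
  | @head A B hAB hBM ih =>
    intro hok P hstep
    rcases hok with ⟨X, hph⟩ | hs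
    · rcases diamond hph hstep hAB with h | h | ⟨x, y, h⟩ | ⟨R, hPR, hBR⟩
      · exact h ▸ ⟨M, hBM, hM⟩
      · exact ⟨P, Relation.ReflTransGen.refl, h P hstep⟩
      · have horchB : IsOrchard B := ⟨M, hBM, hM⟩
        have : IsOrchard (mapN (Equiv.swap x y) B) := mapN_orchard horchB
        rw [h] at this
        have heq : mapN (Equiv.swap x y) (mapN (Equiv.swap x y) P) = P := by
          have h2 : (Equiv.swap x y).symm = Equiv.swap x y := Equiv.symm_swap x y
          conv_lhs => rw [← h2]
          exact mapN_mapN_self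
        rw [heq] at this
        exact this
      · have horchR : IsOrchard R := ih (step_netOK (Or.inl ⟨X, hph⟩) hAB) R hBR
        obtain ⟨M', hseq', hM'⟩ := horchR
        exact ⟨M', Relation.ReflTransGen.head hPR hseq', hM'⟩
    · exact absurd hstep (no_step_of_single hs)

end Digraph'

open Digraph'

/-- every maximal sequence of cherry reductions applied to an orchard
network is complete, i.e. ends in the single-vertex network. -/
theorem stmt_11 (N N' : Digraph') (X : Finset ℕ)
    (hnet : N.IsPhylo X ∨ IsSingle N)
    (horch : N.IsOrchard)
    (hseq : Relation.ReflTransGen CherryStep N N')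
    (hmax : ¬ ∃ a b, N'.IsCherry a b ∨ N'.IsRetCherry a b) :
    IsSingle N' := by
  have hok : NetOK N := by
    rcases hnet with h | h
    · exact Or.inl ⟨X, h⟩
    · exact Or.inr h
  clear hnet
  revert hok horch
  induction hseq using Relation.ReflTransGen.head_induction_on with
  | refl =>
    intro horch _
    obtain ⟨M, hseq', hM⟩ := horch
    rcases Relation.ReflTransGen.cases_head hseq' with heq | ⟨B, hstep, _⟩
    · exact heq ▸ hM
    · exfalso
      obtain ⟨x, y, hs | hs⟩ := hstep
      · exact hmax ⟨x, y, Or.inl hs.1⟩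
      · exact hmax ⟨x, y, Or.inr hs.1⟩
  | @head A B hstep hrest ih =>
    intro horch hok
    exact ih (orchard_step hok horch hstep) (step_netOK hok hstep)
end
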